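/- arXiv:1706.00341 — 7 statements merged into one kernel-verified Lean document; each statement's English description precedes it below -/
import Mathlib

section
/- Position diffusion identity (Eq. (14) of the paper, single jump term, real amplitude): Let N ∈ ℕ, ℏ > 0, κ ∈ ℝ^N, and let f : ℝ^N → ℝ be a bounded C¹ function with bounded gradient. Let ψ : ℝ^N → ℂ be a Schwartz function and (Aψ)(p) = f(p + ℏκ)·ψ(p + ℏκ). Then for every coordinate n ∈ {1,…,N}: ℏ²·∫_{ℝ^N} |∂_{p_n}(Aψ)(p)|² dp − ℏ²·Re ∫_{ℝ^N} conj(∂_{p_n}ψ(p))·∂_{p_n}( f(p)²·ψ(p) ) dp = ℏ²·∫_{ℝ^N} (∂_{p_n} f(p))²·|ψ(p)|² dp. In particular this quantity, which equals the dissipative production rate Tr[x̂_n² D_A(|ψ⟩⟨ψ|)] of the position second moment (with x̂_n = iℏ∂_{p_n}), is nonnegative, and it is strictly positive unless (∂_{p_n} f)·ψ = 0 almost everywhere. -/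
open MeasureTheory

private lemma pd_ptwise (t s : ℝ) (z w : ℂ) :
    ((starRingEnd ℂ) w * (2 * (s:ℂ) * (t:ℂ) * z + (s:ℂ)^2 * w)).re
      = ‖(t:ℂ)*z + (s:ℂ)*w‖^2 - t^2 * ‖z‖^2 := by
  have h1 : ∀ u : ℂ, ‖u‖^2 = Complex.normSq u := fun u => by
    rw [← Complex.sq_norm]
  rw [h1, h1]
  simp only [Complex.normSq_apply, Complex.mul_re, Complex.mul_im, Complex.add_re,
    Complex.add_im, Complex.conj_re, Complex.conj_im, Complex.ofReal_re, Complex.ofReal_im,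
    Complex.re_ofNat, Complex.im_ofNat, ← Complex.ofReal_pow]
  ring

set_option maxHeartbeats 2000000 in
/-- **Position diffusion identity** (Eq. (14) of the paper, single jump term, real
amplitude). In the momentum representation with position operator `x̂_n = iℏ∂_{p_n}`,
for the translation-invariant jump operator `(Aψ)(p) = f(p + ℏκ)·ψ(p + ℏκ)` with `f`
real, bounded, `C¹` with bounded gradient, and `ψ` Schwartz, the dissipative production
rate `Tr[x̂_n² D_A(|ψ⟩⟨ψ|)]` of the position second moment equals
`ℏ²∫(∂_{p_n}f)²|ψ|²`, which is nonnegative and strictly positive unless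
`(∂_{p_n}f)·ψ = 0` almost everywhere. -/
theorem position_diffusion_identity
    (N : ℕ) (ℏ : ℝ) (hℏ : 0 < ℏ) (κ : EuclideanSpace ℝ (Fin N))
    (f : EuclideanSpace ℝ (Fin N) → ℝ)
    (hf_smooth : ContDiff ℝ 1 f)
    (hf_bdd : ∃ M : ℝ, ∀ p, |f p| ≤ M)
    (hf_grad_bdd : ∃ M : ℝ, ∀ p, ‖fderiv ℝ f p‖ ≤ M)
    (ψ : SchwartzMap (EuclideanSpace ℝ (Fin N)) ℂ)
    (n : Fin N) :
    ℏ ^ 2 * (∫ p : EuclideanSpace ℝ (Fin N),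
        ‖fderiv ℝ (fun q => (f (q + ℏ • κ) : ℂ) * ψ (q + ℏ • κ)) p
          (EuclideanSpace.single n 1)‖ ^ 2)
      - ℏ ^ 2 * (∫ p : EuclideanSpace ℝ (Fin N),
          (starRingEnd ℂ) (fderiv ℝ (⇑ψ) p (EuclideanSpace.single n 1)) *
            fderiv ℝ (fun q => ((f q : ℂ) ^ 2) * ψ q) p (EuclideanSpace.single n 1)).re
      = ℏ ^ 2 * (∫ p : EuclideanSpace ℝ (Fin N),
          (fderiv ℝ f p (EuclideanSpace.single n 1)) ^ 2 * ‖ψ p‖ ^ 2) ∧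
    0 ≤ ℏ ^ 2 * (∫ p : EuclideanSpace ℝ (Fin N),
          (fderiv ℝ f p (EuclideanSpace.single n 1)) ^ 2 * ‖ψ p‖ ^ 2) ∧
    (¬ ((fun p : EuclideanSpace ℝ (Fin N) =>
          (fderiv ℝ f p (EuclideanSpace.single n 1) : ℂ) * ψ p)
        =ᵐ[volume] 0) →
      0 < ℏ ^ 2 * (∫ p : EuclideanSpace ℝ (Fin N),
          (fderiv ℝ f p (EuclideanSpace.single n 1)) ^ 2 * ‖ψ p‖ ^ 2)) := by
  obtain ⟨Mf, hMf⟩ := hf_bdd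
  obtain ⟨Mg, hMg⟩ := hf_grad_bdd
  set e : EuclideanSpace ℝ (Fin N) := EuclideanSpace.single n 1 with he_def
  set c : EuclideanSpace ℝ (Fin N) := ℏ • κ with hc_def
  set a : EuclideanSpace ℝ (Fin N) → ℝ := fun p => fderiv ℝ f p e with ha_def
  set χ : SchwartzMap (EuclideanSpace ℝ (Fin N)) ℂ :=
    SchwartzMap.evalCLM (𝕜 := ℝ) (E := _) (G := ℂ) e (SchwartzMap.fderivCLM (𝕜 := ℝ) (E := _) (F := ℂ) ψ) with hχ_def
  have hχ_eq : ∀ p, fderiv ℝ (⇑ψ) p e = χ p := fun p => rfl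
  have hfd : Differentiable ℝ f := hf_smooth.differentiable one_ne_zero
  have hψd : Differentiable ℝ (⇑ψ) := (ψ.smooth ⊤).differentiable (by simp)
  -- norm of e
  have he_norm : ‖e‖ = 1 := by
    rw [he_def, EuclideanSpace.norm_single]; norm_num
  -- bound on a
  have ha_bdd : ∀ p, |a p| ≤ Mg := by
    intro p
    calc |a p| = ‖fderiv ℝ f p e‖ := rfl
    _ ≤ ‖fderiv ℝ f p‖ * ‖e‖ := (fderiv ℝ f p).le_opNorm e
    _ = ‖fderiv ℝ f p‖ := by rw [he_norm, mul_one]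
    _ ≤ Mg := hMg p
  -- continuity
  have ha_cont : Continuous a :=
    (hf_smooth.continuous_fderiv one_ne_zero).clm_apply continuous_const
  -- derivative of (f q : ℂ)
  have hfc : ∀ p, HasFDerivAt (fun q => (f q : ℂ))
      (Complex.ofRealCLM.comp (fderiv ℝ f p)) p := fun p =>
    Complex.ofRealCLM.hasFDerivAt.comp p (hfd p).hasFDerivAt
  -- derivative of f·ψ
  have hF : ∀ p, HasFDerivAt (fun q => (f q : ℂ) * ψ q)
      ((f p : ℂ) • (fderiv ℝ (⇑ψ) p) + ψ p • (Complex.ofRealCLM.comp (fderiv ℝ f p))) p :=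
    fun p => (hfc p).mul (hψd p).hasFDerivAt
  have hFe : ∀ p, fderiv ℝ (fun q => (f q : ℂ) * ψ q) p e
      = (a p : ℂ) * ψ p + (f p : ℂ) * χ p := by
    intro p
    rw [(hF p).fderiv]
    simp only [ContinuousLinearMap.add_apply, ContinuousLinearMap.smul_apply,
      ContinuousLinearMap.comp_apply, Complex.ofRealCLM_apply, smul_eq_mul,
      hχ_eq, ha_def]
    ring
  -- derivative of shifted f·ψ
  have hshift : ∀ p, fderiv ℝ (fun q => (f (q + c) : ℂ) * ψ (q + c)) p e
      = (a (p + c) : ℂ) * ψ (p + c) + (f (p + c) : ℂ) * χ (p + c) := by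
    intro p
    have h1 : HasFDerivAt (fun q : EuclideanSpace ℝ (Fin N) => q + c)
        (ContinuousLinearMap.id ℝ _) p := (hasFDerivAt_id p).add_const c
    have h2 := (hF (p + c)).comp p h1
    rw [ContinuousLinearMap.comp_id] at h2
    have h2' : HasFDerivAt (fun q => (f (q + c) : ℂ) * ψ (q + c))
        ((f (p + c) : ℂ) • (fderiv ℝ (⇑ψ) (p + c))
          + ψ (p + c) • (Complex.ofRealCLM.comp (fderiv ℝ f (p + c)))) p := h2
    rw [h2'.fderiv]
    simp only [ContinuousLinearMap.add_apply, ContinuousLinearMap.smul_apply,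
      ContinuousLinearMap.comp_apply, Complex.ofRealCLM_apply, smul_eq_mul,
      hχ_eq, ha_def]
    ring
  -- derivative of f²·ψ
  have hF2e : ∀ p, fderiv ℝ (fun q => ((f q : ℂ) ^ 2) * ψ q) p e
      = 2 * (f p : ℂ) * (a p : ℂ) * ψ p + (f p : ℂ)^2 * χ p := by
    intro p
    have heq : (fun q => ((f q : ℂ) ^ 2) * ψ q)
        = fun q => (f q : ℂ) * ((f q : ℂ) * ψ q) := by
      funext q; ring
    rw [heq]
    have h2 : HasFDerivAt (fun q => (f q : ℂ) * ((f q : ℂ) * ψ q))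
        ((f p : ℂ) • ((f p : ℂ) • (fderiv ℝ (⇑ψ) p) + ψ p • (Complex.ofRealCLM.comp (fderiv ℝ f p)))
          + ((f p : ℂ) * ψ p) • (Complex.ofRealCLM.comp (fderiv ℝ f p))) p :=
      (hfc p).mul (hF p)
    rw [h2.fderiv]
    simp only [ContinuousLinearMap.add_apply, ContinuousLinearMap.smul_apply,
      ContinuousLinearMap.comp_apply, Complex.ofRealCLM_apply, smul_eq_mul,
      hχ_eq, ha_def]
    ring
  -- bounds on Schwartz functions
  obtain ⟨Cψ, hCψ⟩ := ψ.decay 0 0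
  have hψ_bdd : ∀ p, ‖ψ p‖ ≤ Cψ := by
    intro p
    have := hCψ.2 p
    simpa [norm_iteratedFDeriv_zero] using this
  obtain ⟨Cχ, hCχ⟩ := χ.decay 0 0
  have hχ_bdd : ∀ p, ‖χ p‖ ≤ Cχ := by
    intro p
    have := hCχ.2 p
    simpa [norm_iteratedFDeriv_zero] using this
  -- the combined function G
  set G : EuclideanSpace ℝ (Fin N) → ℂ :=
    fun p => (a p : ℂ) * ψ p + (f p : ℂ) * χ p with hG_def
  have hG_int : Integrable G := by
    apply Integrable.add
    · exact Integrable.bdd_mul ψ.integrable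
        ((Complex.continuous_ofReal.comp ha_cont).aestronglyMeasurable)
        (c := Mg) (ae_of_all _ fun p => by simpa using ha_bdd p)
    · exact Integrable.bdd_mul χ.integrable
        ((Complex.continuous_ofReal.comp hf_smooth.continuous).aestronglyMeasurable)
        (c := Mf) (ae_of_all _ fun p => by simpa using hMf p)
  have hG_cont : Continuous G := by
    apply Continuous.add
    · exact (Complex.continuous_ofReal.comp ha_cont).mul ψ.continuous
    · exact (Complex.continuous_ofReal.comp hf_smooth.continuous).mul χ.continuous
  have hG_bdd : ∀ p, ‖G p‖ ≤ Mg * Cψ + Mf * Cχ := by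
    intro p
    calc ‖G p‖ ≤ ‖(a p : ℂ) * ψ p‖ + ‖(f p : ℂ) * χ p‖ := norm_add_le _ _
    _ = |a p| * ‖ψ p‖ + |f p| * ‖χ p‖ := by simp
    _ ≤ Mg * Cψ + Mf * Cχ :=
        add_le_add
          (mul_le_mul (ha_bdd p) (hψ_bdd p) (norm_nonneg _) ((abs_nonneg _).trans (ha_bdd p)))
          (mul_le_mul (hMf p) (hχ_bdd p) (norm_nonneg _) ((abs_nonneg _).trans (hMf p)))
  have hG2_int : Integrable (fun p => ‖G p‖ ^ 2) := by
    have : Integrable (fun p => ‖G p‖ * ‖G p‖) :=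
      Integrable.bdd_mul hG_int.norm hG_cont.norm.aestronglyMeasurable
        (c := Mg * Cψ + Mf * Cχ) (ae_of_all _ fun p => by simpa using hG_bdd p)
    simpa [pow_two] using this
  -- integrability of ‖ψ‖²
  have hψ2_int : Integrable (fun p => ‖ψ p‖ ^ 2) := by
    have : Integrable (fun p => ‖ψ p‖ * ‖ψ p‖) :=
      Integrable.bdd_mul ψ.integrable.norm ψ.continuous.norm.aestronglyMeasurable
        (c := Cψ) (ae_of_all _ fun p => by simpa using hψ_bdd p)
    simpa [pow_two] using this
  -- integrability of J
  have hJ_int : Integrable (fun p => a p ^ 2 * ‖ψ p‖ ^ 2) := by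
    apply Integrable.bdd_mul (c := Mg ^ 2) hψ2_int (ha_cont.pow 2).aestronglyMeasurable
    refine ae_of_all _ fun p => ?_
    have := ha_bdd p
    calc ‖a p ^ 2‖ = |a p| ^ 2 := by simp [abs_pow]
    _ ≤ Mg ^ 2 := by
        have h0 : (0:ℝ) ≤ |a p| := abs_nonneg _
        nlinarith
  -- integrability of the complex integrand I2
  have hI2_int : Integrable (fun p =>
      (starRingEnd ℂ) (χ p) * (2 * (f p : ℂ) * (a p : ℂ) * ψ p + (f p : ℂ)^2 * χ p)) := by
    apply Integrable.bdd_mul (c := Cχ)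
    · apply Integrable.add
      · exact Integrable.bdd_mul ψ.integrable
          ((continuous_const.mul (Complex.continuous_ofReal.comp hf_smooth.continuous)).mul
            (Complex.continuous_ofReal.comp ha_cont)).aestronglyMeasurable
          (c := 2 * (Mf * Mg)) (ae_of_all _ fun p => by
            have h1 := hMf p; have h2 := ha_bdd p
            have h3 : (0:ℝ) ≤ |f p| := abs_nonneg _
            have h4 : (0:ℝ) ≤ |a p| := abs_nonneg _
            simp only [norm_mul, Complex.norm_real, Complex.norm_ofNat, Real.norm_eq_abs]
            nlinarith)
      · exact Integrable.bdd_mul χ.integrable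
          (((Complex.continuous_ofReal.comp hf_smooth.continuous)).pow 2).aestronglyMeasurable
          (c := Mf ^ 2) (ae_of_all _ fun p => by
            have h1 := hMf p
            have h3 : (0:ℝ) ≤ |f p| := abs_nonneg _
            simp only [norm_pow, Complex.norm_real, Real.norm_eq_abs]
            nlinarith)
    · exact (Complex.continuous_conj.comp χ.continuous).aestronglyMeasurable
    · exact ae_of_all _ fun p => by simpa using hχ_bdd p
  -- Step 1: first integral equals ∫ ‖G‖²
  have hT1 : (∫ p : EuclideanSpace ℝ (Fin N),
        ‖fderiv ℝ (fun q => (f (q + ℏ • κ) : ℂ) * ψ (q + ℏ • κ)) p e‖ ^ 2)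
      = ∫ p, ‖G p‖ ^ 2 := by
    have h1 : (∫ p : EuclideanSpace ℝ (Fin N),
          ‖fderiv ℝ (fun q => (f (q + ℏ • κ) : ℂ) * ψ (q + ℏ • κ)) p e‖ ^ 2)
        = ∫ p : EuclideanSpace ℝ (Fin N), ‖G (p + c)‖ ^ 2 := by
      refine integral_congr_ae (Filter.Eventually.of_forall fun p => ?_)
      simp only [← hc_def, hshift]; rfl
    rw [h1, integral_add_right_eq_self (fun p => ‖G p‖ ^ 2) c]
  -- Step 2: second integral
  have hT2 : (∫ p : EuclideanSpace ℝ (Fin N),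
        (starRingEnd ℂ) (fderiv ℝ (⇑ψ) p e) *
          fderiv ℝ (fun q => ((f q : ℂ) ^ 2) * ψ q) p e).re
      = (∫ p, ‖G p‖ ^ 2) - ∫ p, a p ^ 2 * ‖ψ p‖ ^ 2 := by
    have h1 : (∫ p : EuclideanSpace ℝ (Fin N),
          (starRingEnd ℂ) (fderiv ℝ (⇑ψ) p e) *
            fderiv ℝ (fun q => ((f q : ℂ) ^ 2) * ψ q) p e)
        = ∫ p, (starRingEnd ℂ) (χ p) *
            (2 * (f p : ℂ) * (a p : ℂ) * ψ p + (f p : ℂ)^2 * χ p) := by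
      refine integral_congr_ae (Filter.Eventually.of_forall fun p => ?_)
      simp only [hχ_eq, hF2e]
    rw [h1]
    have h2 := integral_re (μ := volume) hI2_int
    simp only [RCLike.re_to_complex] at h2
    rw [← h2]
    have h3 : (∫ p, ((starRingEnd ℂ) (χ p) *
          (2 * (f p : ℂ) * (a p : ℂ) * ψ p + (f p : ℂ)^2 * χ p)).re)
        = ∫ p, (‖G p‖ ^ 2 - a p ^ 2 * ‖ψ p‖ ^ 2) := by
      refine integral_congr_ae (Filter.Eventually.of_forall fun p => ?_)
      exact pd_ptwise (a p) (f p) (ψ p) (χ p)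
    rw [h3, integral_sub hG2_int hJ_int]
  -- nonnegativity of J-integral
  have hJ_nonneg : 0 ≤ ∫ p, a p ^ 2 * ‖ψ p‖ ^ 2 :=
    integral_nonneg fun p => mul_nonneg (sq_nonneg _) (sq_nonneg _)
  refine ⟨?_, ?_, ?_⟩
  · rw [hT1, hT2]; ring
  · exact mul_nonneg (sq_nonneg _) hJ_nonneg
  · intro h
    have hne : (∫ p, a p ^ 2 * ‖ψ p‖ ^ 2) ≠ 0 := by
      intro h0
      apply h
      have := (integral_eq_zero_iff_of_nonneg
        (fun p => mul_nonneg (sq_nonneg _) (sq_nonneg _)) hJ_int).mp h0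
      filter_upwards [this] with p hp
      simp only [Pi.zero_apply] at hp ⊢
      rcases mul_eq_zero.mp hp with h1 | h2
      · have : a p = 0 := by
          have := sq_eq_zero_iff.mp h1; exact this
        simp [ha_def] at this ⊢
        left
        exact_mod_cast this
      · have : ψ p = 0 := by
          have := sq_eq_zero_iff.mp h2
          exact norm_eq_zero.mp this
        simp [this]
    exact mul_pos (pow_pos hℏ 2) (lt_of_le_of_ne hJ_nonneg (Ne.symm hne))
end

section
/- No-go theorem for pure steady states (Theorem 1 of the paper, driftless form): Let N, K ∈ ℕ with K ≥ 1, ℏ > 0, κ_k ∈ ℝ^N and f_k : ℝ^N → ℂ measurable for k = 1,…,K. Let φ ∈ L²(ℝ^N, ℂ) with φ(p) ≠ 0 for almost every p. Suppose the steady-state conditions hold: (i) Σ_{k=1}^K |f_k(p + ℏκ_k)·φ(p + ℏκ_k)|² = (Σ_{k=1}^K |f_k(p)|²)·|φ(p)|² for almost every p ∈ ℝ^N, and (ii) Σ_{k=1}^K f_k(p + ℏκ_k)·φ(p + ℏκ_k)·conj( f_k(p' + ℏκ_k)·φ(p' + ℏκ_k) ) = (1/2)·Σ_{k=1}^K ( |f_k(p)|²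 + |f_k(p')|² )·φ(p)·conj(φ(p')) for almost every (p, p') ∈ ℝ^N × ℝ^N. Then for every k there exists a constant c_k ∈ ℂ such that f_k(p) = c_k for almost every p, and c_k ≠ 0 implies κ_k = 0. Consequently every jump operator is a scalar multiple of the identity and the dissipator Σ_k D_{A(κ_k, f_k)} vanishes identically: no nontrivial translation-invariant Markovian dissipation admits |φ⟩⟨φ| as a steady state. -/
open MeasureTheory

private lemma norm_sub_sq_c (z w : ℂ) :
    ‖z - w‖^2 = ‖z‖^2 + ‖w‖^2 - 2*(z * (starRingEnd ℂ) w).re := by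
  simp only [Complex.sq_norm, Complex.normSq_sub]

private lemma ptwise {K : ℕ} (v w : Fin K → ℂ) (x y : ℂ) (hx : x ≠ 0) (hy : y ≠ 0)
    (Fp Fq : ℝ)
    (h1 : ∑ k, ‖v k‖^2 = Fp * ‖x‖^2)
    (h2 : ∑ k, ‖w k‖^2 = Fq * ‖y‖^2)
    (h3 : ∑ k, v k * (starRingEnd ℂ) (w k)
        = (1/2:ℂ) * ((Fp + Fq : ℝ):ℂ) * (x * (starRingEnd ℂ) y)) :
    ∀ k, v k / x = w k / y := by
  have hxy : x * (starRingEnd ℂ) y ≠ 0 :=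
    mul_ne_zero hx (by simpa using hy)
  have e1 : ∑ k, ‖v k / x‖^2 = Fp := by
    simp only [norm_div, div_pow, ← Finset.sum_div, h1]
    exact mul_div_cancel_right₀ Fp (pow_ne_zero 2 (norm_ne_zero_iff.mpr hx))
  have e2 : ∑ k, ‖w k / y‖^2 = Fq := by
    simp only [norm_div, div_pow, ← Finset.sum_div, h2]
    exact mul_div_cancel_right₀ Fq (pow_ne_zero 2 (norm_ne_zero_iff.mpr hy))
  have e3 : ∑ k, ((v k / x) * (starRingEnd ℂ) (w k / y)).re = (Fp + Fq)/2 := by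
    have hs : ∑ k, (v k / x) * (starRingEnd ℂ) (w k / y)
        = (1/2:ℂ) * ((Fp + Fq : ℝ):ℂ) := by
      have : ∀ k : Fin K, (v k / x) * (starRingEnd ℂ) (w k / y)
          = v k * (starRingEnd ℂ) (w k) / (x * (starRingEnd ℂ) y) := by
        intro k
        rw [map_div₀]
        ring
      rw [Finset.sum_congr rfl (fun k _ => this k), ← Finset.sum_div, h3,
        mul_div_assoc, div_self hxy, mul_one]
    rw [← Complex.re_sum, hs]
    simp
    ring
  have hS : ∑ k, ‖v k / x - w k / y‖^2 = 0 := by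
    have expand : ∑ k, ‖v k / x - w k / y‖^2
        = (∑ k, ‖v k / x‖^2) + (∑ k, ‖w k / y‖^2)
          - 2 * ∑ k, ((v k / x) * (starRingEnd ℂ) (w k / y)).re := by
      rw [Finset.mul_sum, ← Finset.sum_add_distrib, ← Finset.sum_sub_distrib]
      exact Finset.sum_congr rfl fun k _ => norm_sub_sq_c _ _
    rw [expand, e1, e2, e3]; ring
  intro k
  have := (Finset.sum_eq_zero_iff_of_nonneg
    (fun i _ => sq_nonneg ‖v i / x - w i / y‖)).mp hS k (Finset.mem_univ k)
  have := (pow_eq_zero_iff two_ne_zero).mp this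
  rw [norm_eq_zero, sub_eq_zero] at this
  exact this

open scoped FourierTransform

set_option maxHeartbeats 2000000 in
/-- **No-go theorem for pure steady states** (Theorem 1 of the paper, driftless form).
In the momentum representation, let `φ ∈ L²(ℝ^N, ℂ)` be nonzero almost everywhere
(e.g. a Hamiltonian eigenstate). If the pure state `|φ⟩⟨φ|` is a steady state of the
translation-invariant Lindblad dissipator `Σ_k D_{A(κ_k, f_k)}`, expressed through its
diagonal part (i) and its integral-kernel identity (ii), then every amplitude `f_k` is
a.e. constant, and a nonzero constant forces the recoil momentum `ℏκ_k` to vanish: the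
dissipator acts trivially. -/
theorem no_go_pure_steady_state
    (N K : ℕ) (hK : 1 ≤ K) (ℏ : ℝ) (hℏ : 0 < ℏ)
    (κ : Fin K → EuclideanSpace ℝ (Fin N))
    (f : Fin K → EuclideanSpace ℝ (Fin N) → ℂ)
    (hf_meas : ∀ k, Measurable (f k))
    (φ : EuclideanSpace ℝ (Fin N) → ℂ)
    (hφ_L2 : MemLp φ 2 (volume : Measure (EuclideanSpace ℝ (Fin N))))
    (hφ_ne : ∀ᵐ p : EuclideanSpace ℝ (Fin N) ∂volume, φ p ≠ 0)
    (hdiag : ∀ᵐ p : EuclideanSpace ℝ (Fin N) ∂volume,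
      ∑ k : Fin K, ‖f k (p + ℏ • κ k) * φ (p + ℏ • κ k)‖ ^ 2
        = (∑ k : Fin K, ‖f k p‖ ^ 2) * ‖φ p‖ ^ 2)
    (hker : ∀ᵐ q : EuclideanSpace ℝ (Fin N) × EuclideanSpace ℝ (Fin N)
        ∂(volume.prod volume),
      ∑ k : Fin K, f k (q.1 + ℏ • κ k) * φ (q.1 + ℏ • κ k) *
          (starRingEnd ℂ) (f k (q.2 + ℏ • κ k) * φ (q.2 + ℏ • κ k))
        = (1 / 2 : ℂ) * ∑ k : Fin K,
            ((‖f k q.1‖ ^ 2 + ‖f k q.2‖ ^ 2 : ℝ) : ℂ) *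
              (φ q.1 * (starRingEnd ℂ) (φ q.2))) :
    ∀ k : Fin K, ∃ c : ℂ,
      (∀ᵐ p : EuclideanSpace ℝ (Fin N) ∂volume, f k p = c) ∧ (c ≠ 0 → κ k = 0) := by
  classical
  set a : Fin K → EuclideanSpace ℝ (Fin N) := fun k => ℏ • κ k with ha
  -- volume is nonzero
  have hvol : (volume : Measure (EuclideanSpace ℝ (Fin N))) ≠ 0 := by
    intro h
    have := isOpen_univ.measure_pos (volume : Measure (EuclideanSpace ℝ (Fin N)))
      ⟨0, trivial⟩
    simp [h] at this
  haveI : (ae (volume : Measure (EuclideanSpace ℝ (Fin N)))).NeBot := ae_neBot.mpr hvol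
  -- Step A : product a.e. proportionality
  have hprod : ∀ᵐ q : EuclideanSpace ℝ (Fin N) × EuclideanSpace ℝ (Fin N)
      ∂((volume : Measure (EuclideanSpace ℝ (Fin N))).prod volume),
      ∀ k, f k (q.1 + a k) * φ (q.1 + a k) / φ q.1
        = f k (q.2 + a k) * φ (q.2 + a k) / φ q.2 := by
    filter_upwards [hker, Measure.quasiMeasurePreserving_fst.ae hdiag,
      Measure.quasiMeasurePreserving_snd.ae hdiag,
      Measure.quasiMeasurePreserving_fst.ae hφ_ne,
      Measure.quasiMeasurePreserving_snd.ae hφ_ne] with q h3 h1 h2 hx hy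
    refine ptwise _ _ _ _ hx hy _ _ h1 h2 ?_
    rw [h3]
    rw [← Finset.sum_mul]
    push_cast
    rw [Finset.sum_add_distrib]
    ring
  -- Step B : extract the constant vector c
  have hae2 := Measure.ae_ae_of_ae_prod hprod
  obtain ⟨p₀, hp₀, hφp₀⟩ := (hae2.and hφ_ne).exists
  set c : Fin K → ℂ := fun k => f k (p₀ + a k) * φ (p₀ + a k) / φ p₀ with hc
  have hconst : ∀ᵐ p : EuclideanSpace ℝ (Fin N) ∂volume,
      ∀ k, f k (p + a k) * φ (p + a k) = c k * φ p := by
    filter_upwards [hp₀, hφ_ne] with p h hp k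
    have hk := (h k).symm
    rw [div_eq_div_iff hp hφp₀] at hk
    simp only [hc]
    rw [div_mul_eq_mul_div, eq_div_iff hφp₀]
    linear_combination hk
  -- Step C : F is a.e. constant
  set lam0 : ℝ := ∑ j, ‖c j‖^2 with hlam0
  have hFconst : ∀ᵐ p : EuclideanSpace ℝ (Fin N) ∂volume,
      (∑ j, ‖f j p‖^2) = lam0 := by
    filter_upwards [hdiag, hconst, hφ_ne] with p h1 h2 hp
    have hsum : ∑ j, ‖c j * φ p‖^2 = (∑ j, ‖f j p‖^2) * ‖φ p‖^2 := by
      rw [← h1]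
      exact Finset.sum_congr rfl fun j _ => by rw [h2 j]
    have : lam0 * ‖φ p‖^2 = (∑ j, ‖f j p‖^2) * ‖φ p‖^2 := by
      rw [← hsum, hlam0, Finset.sum_mul]
      exact Finset.sum_congr rfl fun j _ => by rw [norm_mul, mul_pow]
    exact (mul_right_cancel₀ (pow_ne_zero 2 (norm_ne_zero_iff.mpr hp)) this).symm
  intro k
  by_cases hck : c k = 0
  · -- c k = 0 : f k = 0 a.e.
    refine ⟨0, ?_, by simp⟩
    have h0 : ∀ᵐ p : EuclideanSpace ℝ (Fin N) ∂volume,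
        f k (p + a k) * φ (p + a k) = 0 := by
      filter_upwards [hconst] with p h
      simpa [hck] using h k
    have h0' := (measurePreserving_add_right
      (volume : Measure (EuclideanSpace ℝ (Fin N))) (-(a k))).quasiMeasurePreserving.ae h0
    filter_upwards [h0', hφ_ne] with q hq hφq
    simp only [neg_add_cancel_right] at hq
    exact (mul_eq_zero.mp hq).resolve_right hφq
  · -- c k ≠ 0 : κ k = 0 and f k = c k a.e.
    have hκ : κ k = 0 := by
      by_contra hκne
      have hak : a k ≠ 0 := by
        rw [ha]
        exact smul_ne_zero (ne_of_gt hℏ) hκne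
      -- squared-modulus identity, translated
      have htrans : ∀ j : Fin K, ∀ᵐ q : EuclideanSpace ℝ (Fin N) ∂volume,
          ‖f j q‖^2 * ‖φ q‖^2 = ‖c j‖^2 * ‖φ (q + -(a j))‖^2 := by
        intro j
        have h1 : ∀ᵐ p : EuclideanSpace ℝ (Fin N) ∂volume,
            ‖f j (p + a j)‖^2 * ‖φ (p + a j)‖^2 = ‖c j‖^2 * ‖φ p‖^2 := by
          filter_upwards [hconst] with p h
          have := congrArg (fun z : ℂ => ‖z‖^2) (h j)
          simpa [norm_mul, mul_pow] using this
        have := (measurePreserving_add_right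
          (volume : Measure (EuclideanSpace ℝ (Fin N))) (-(a j))).quasiMeasurePreserving.ae h1
        simpa using this
      have hsum : ∀ᵐ q : EuclideanSpace ℝ (Fin N) ∂volume,
          ∑ j, ‖c j‖^2 * ‖φ (q + -(a j))‖^2 = lam0 * ‖φ q‖^2 := by
        filter_upwards [ae_all_iff.mpr htrans, hFconst] with q h hFq
        calc ∑ j, ‖c j‖^2 * ‖φ (q + -(a j))‖^2
            = ∑ j, ‖f j q‖^2 * ‖φ q‖^2 :=
              (Finset.sum_congr rfl fun j _ => (h j).symm)
          _ = (∑ j, ‖f j q‖^2) * ‖φ q‖^2 := by rw [Finset.sum_mul]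
          _ = lam0 * ‖φ q‖^2 := by rw [hFq]
      -- Fourier analysis
      set H : EuclideanSpace ℝ (Fin N) → ℂ := fun q => ((‖φ q‖^2 : ℝ) : ℂ) with hH
      have hφ2 : Integrable (fun q : EuclideanSpace ℝ (Fin N) => ‖φ q‖^2) volume := by
        have := hφ_L2.integrable_norm_rpow two_ne_zero ENNReal.ofNat_ne_top
        simpa [ENNReal.toReal_ofNat, Real.rpow_natCast] using this
      have hH_int : Integrable H volume := hφ2.ofReal
      have hIpos : 0 < ∫ q : EuclideanSpace ℝ (Fin N), ‖φ q‖^2 := by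
        rcases (integral_nonneg (f := fun q : EuclideanSpace ℝ (Fin N) => ‖φ q‖^2)
          (fun q : EuclideanSpace ℝ (Fin N) => sq_nonneg ‖φ q‖)).lt_or_eq with h | h
        · exact h
        · exfalso
          have h0 := (integral_eq_zero_iff_of_nonneg (f := fun q : EuclideanSpace ℝ (Fin N) => ‖φ q‖^2)
            (fun q : EuclideanSpace ℝ (Fin N) => sq_nonneg ‖φ q‖) hφ2).mp h.symm
          obtain ⟨q, hq1, hq2⟩ := (h0.and hφ_ne).exists
          simp only [Pi.zero_apply] at hq1
          exact hq2 (norm_eq_zero.mp ((pow_eq_zero_iff two_ne_zero).mp hq1))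
      set G := 𝓕 H with hG
      have hGcont : Continuous G := by
        show Continuous (VectorFourier.fourierIntegral _ _ _ H)
        apply VectorFourier.fourierIntegral_continuous Real.continuous_fourierChar
        · exact continuous_inner
        · exact hH_int
      have hG0 : G 0 = ((∫ q : EuclideanSpace ℝ (Fin N), ‖φ q‖^2 : ℝ) : ℂ) := by
        rw [hG, Real.fourier_eq]
        simp only [inner_zero_right, neg_zero, AddChar.map_zero_eq_one, one_smul]
        exact integral_ofReal
      -- multiplier identity
      have key : ∀ ξ : EuclideanSpace ℝ (Fin N),
          (∑ j, ((‖c j‖^2 : ℝ) : ℂ) *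
              (Real.fourierChar ((inner ℝ (-(a j)) ξ : ℝ)) : ℂ)) * G ξ
            = ((lam0 : ℝ) : ℂ) * G ξ := by
        intro ξ
        have hint : ∀ b : EuclideanSpace ℝ (Fin N),
            Integrable (fun v : EuclideanSpace ℝ (Fin N) =>
              (Real.fourierChar (-(inner ℝ v ξ : ℝ)) : ℂ) * H (v + b)) volume := by
          intro b
          have := (Real.fourierIntegral_convergent_iff
            (f := fun t => H (t + b)) (μ := volume) ξ).2 (hH_int.comp_add_right b)
          simpa [Circle.smul_def, smul_eq_mul] using this
        have hGint : (∫ v : EuclideanSpace ℝ (Fin N),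
            (Real.fourierChar (-(inner ℝ v ξ : ℝ)) : ℂ) * H v) = G ξ := by
          rw [hG, Real.fourier_eq]
          simp [Circle.smul_def, smul_eq_mul]
        have htr : ∀ b : EuclideanSpace ℝ (Fin N),
            (∫ v : EuclideanSpace ℝ (Fin N),
              (Real.fourierChar (-(inner ℝ v ξ : ℝ)) : ℂ) * H (v + b))
              = (Real.fourierChar ((inner ℝ b ξ : ℝ)) : ℂ) * G ξ := by
          intro b
          have hsub := integral_add_right_eq_self
            (μ := (volume : Measure (EuclideanSpace ℝ (Fin N))))
            (fun v : EuclideanSpace ℝ (Fin N) =>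
              (Real.fourierChar (-(inner ℝ (v + -b) ξ : ℝ)) : ℂ) * H ((v + -b) + b)) b
          simp only [add_neg_cancel_right] at hsub
          rw [hsub]
          have hptw : ∀ v : EuclideanSpace ℝ (Fin N),
              (Real.fourierChar (-(inner ℝ (v + -b) ξ : ℝ)) : ℂ) * H ((v + -b) + b)
                = (Real.fourierChar ((inner ℝ b ξ : ℝ)) : ℂ) *
                    ((Real.fourierChar (-(inner ℝ v ξ : ℝ)) : ℂ) * H v) := by
            intro v
            have : -(inner ℝ (v + -b) ξ : ℝ) = (inner ℝ b ξ : ℝ) + -(inner ℝ v ξ : ℝ) := by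
              rw [inner_add_left, inner_neg_left]; ring
            rw [neg_add_cancel_right, this, AddChar.map_add_eq_mul]
            push_cast
            ring
          rw [integral_congr_ae (Filter.Eventually.of_forall hptw), integral_const_mul, hGint]
        -- equate integrals of a.e.-equal functions
        have hLHSint : (∫ v : EuclideanSpace ℝ (Fin N),
            (Real.fourierChar (-(inner ℝ v ξ : ℝ)) : ℂ) *
              (∑ j, ((‖c j‖^2 : ℝ) : ℂ) * H (v + -(a j))))
            = (∑ j, ((‖c j‖^2 : ℝ) : ℂ) *
                (Real.fourierChar ((inner ℝ (-(a j)) ξ : ℝ)) : ℂ)) * G ξ := by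
          have hptw : ∀ v : EuclideanSpace ℝ (Fin N),
              (Real.fourierChar (-(inner ℝ v ξ : ℝ)) : ℂ) *
                (∑ j, ((‖c j‖^2 : ℝ) : ℂ) * H (v + -(a j)))
              = ∑ j, ((‖c j‖^2 : ℝ) : ℂ) *
                  ((Real.fourierChar (-(inner ℝ v ξ : ℝ)) : ℂ) * H (v + -(a j))) := by
            intro v
            rw [Finset.mul_sum]
            exact Finset.sum_congr rfl fun j _ => by ring
          rw [integral_congr_ae (Filter.Eventually.of_forall hptw),
            integral_finset_sum _ (fun j _ => (hint (-(a j))).const_mul _)]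
          rw [Finset.sum_mul]
          exact Finset.sum_congr rfl fun j _ => by
            rw [integral_const_mul, htr (-(a j)), mul_assoc]
        have hRHSint : (∫ v : EuclideanSpace ℝ (Fin N),
            (Real.fourierChar (-(inner ℝ v ξ : ℝ)) : ℂ) * (((lam0 : ℝ) : ℂ) * H v))
            = ((lam0 : ℝ) : ℂ) * G ξ := by
          have hptw : ∀ v : EuclideanSpace ℝ (Fin N),
              (Real.fourierChar (-(inner ℝ v ξ : ℝ)) : ℂ) * (((lam0 : ℝ) : ℂ) * H v)
                = ((lam0 : ℝ) : ℂ) * ((Real.fourierChar (-(inner ℝ v ξ : ℝ)) : ℂ) * H v) := by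
            intro v; ring
          rw [integral_congr_ae (Filter.Eventually.of_forall hptw), integral_const_mul, hGint]
        rw [← hLHSint, ← hRHSint]
        apply integral_congr_ae
        filter_upwards [hsum] with v hv
        congr 1
        have : ∀ j : Fin K, ((‖c j‖^2 : ℝ) : ℂ) * H (v + -(a j))
            = ((‖c j‖^2 * ‖φ (v + -(a j))‖^2 : ℝ) : ℂ) := by
          intro j; rw [hH]; push_cast; ring
        rw [Finset.sum_congr rfl fun j _ => this j, ← Complex.ofReal_sum, hv, hH]
        push_cast
        ring
      -- G is nonzero near 0, so the multiplier equals lam0 near 0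
      have hGne : ∀ᶠ ξ in nhds (0 : EuclideanSpace ℝ (Fin N)), G ξ ≠ 0 :=
        hGcont.continuousAt.eventually_ne
          (by rw [hG0]; exact_mod_cast hIpos.ne')
      have hcos : ∀ᶠ ξ in nhds (0 : EuclideanSpace ℝ (Fin N)),
          Real.cos (2 * Real.pi * (inner ℝ (a k) ξ : ℝ)) = 1 := by
        filter_upwards [hGne] with ξ hξ
        have hmul := mul_right_cancel₀ hξ (key ξ)
        have hre := congrArg Complex.re hmul
        rw [Complex.re_sum] at hre
        have hterm : ∀ j : Fin K,
            (((‖c j‖^2 : ℝ) : ℂ) *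
              (Real.fourierChar ((inner ℝ (-(a j)) ξ : ℝ)) : ℂ)).re
            = ‖c j‖^2 * Real.cos (2 * Real.pi * (inner ℝ (a j) ξ : ℝ)) := by
          intro j
          rw [Complex.re_ofReal_mul, Real.fourierChar_apply,
            Complex.exp_ofReal_mul_I_re, inner_neg_left]
          rw [mul_neg, Real.cos_neg]
        rw [Finset.sum_congr rfl fun j _ => hterm j, Complex.ofReal_re] at hre
        have hzero : ∑ j, ‖c j‖^2 *
            (1 - Real.cos (2 * Real.pi * (inner ℝ (a j) ξ : ℝ))) = 0 := by
          have : ∑ j, ‖c j‖^2 *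
              (1 - Real.cos (2 * Real.pi * (inner ℝ (a j) ξ : ℝ)))
              = (∑ j, ‖c j‖^2) - ∑ j, ‖c j‖^2 *
                  Real.cos (2 * Real.pi * (inner ℝ (a j) ξ : ℝ)) := by
            rw [← Finset.sum_sub_distrib]
            exact Finset.sum_congr rfl fun j _ => by ring
          rw [this, hre, hlam0]
          ring
        have hterm0 := (Finset.sum_eq_zero_iff_of_nonneg
          (fun j _ => mul_nonneg (sq_nonneg ‖c j‖)
            (by nlinarith [Real.cos_le_one (2 * Real.pi * (inner ℝ (a j) ξ : ℝ))]))).mp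
          hzero k (Finset.mem_univ k)
        have hckn : ‖c k‖^2 ≠ 0 := pow_ne_zero 2 (norm_ne_zero_iff.mpr hck)
        have := (mul_eq_zero.mp hterm0).resolve_left hckn
        linarith
      obtain ⟨δ, hδ, hball⟩ := Metric.eventually_nhds_iff_ball.mp hcos
      have hna : 0 < ‖a k‖ := norm_pos_iff.mpr hak
      set t : ℝ := min (δ / (2 * ‖a k‖)) (1 / (2 * ‖a k‖^2)) with htdef
      have htpos : 0 < t := lt_min (by positivity) (by positivity)
      have hξmem : t • a k ∈ Metric.ball (0 : EuclideanSpace ℝ (Fin N)) δ := by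
        rw [Metric.mem_ball, dist_zero_right, norm_smul, Real.norm_eq_abs,
          abs_of_pos htpos]
        calc t * ‖a k‖ ≤ (δ / (2 * ‖a k‖)) * ‖a k‖ :=
              mul_le_mul_of_nonneg_right (min_le_left _ _) hna.le
          _ = δ / 2 := by
              field_simp
          _ < δ := by linarith
      have hcosk := hball _ hξmem
      rw [real_inner_smul_right, real_inner_self_eq_norm_sq] at hcosk
      have h1 : 0 < t * ‖a k‖^2 := by positivity
      have h2 : t * ‖a k‖^2 < 1 := by
        calc t * ‖a k‖^2 ≤ (1 / (2 * ‖a k‖^2)) * ‖a k‖^2 :=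
              mul_le_mul_of_nonneg_right (min_le_right _ _) (sq_nonneg _)
          _ = 1 / 2 := by
              field_simp
          _ < 1 := by norm_num
      have h2pi : (0:ℝ) < 2 * Real.pi := by positivity
      have hb2 : 2 * Real.pi * (t * ‖a k‖^2) < 2 * Real.pi := by
        calc 2 * Real.pi * (t * ‖a k‖^2) < 2 * Real.pi * 1 :=
              mul_lt_mul_of_pos_left h2 h2pi
          _ = 2 * Real.pi := mul_one _
      have hb1 : -(2 * Real.pi) < 2 * Real.pi * (t * ‖a k‖^2) := by
        have hpos : (0:ℝ) < 2 * Real.pi * (t * ‖a k‖^2) := mul_pos h2pi h1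
        linarith
      have h0' := (Real.cos_eq_one_iff_of_lt_of_lt hb1 hb2).mp hcosk
      rcases mul_eq_zero.mp h0' with h | h
      · exact absurd h (ne_of_gt h2pi)
      · exact absurd h (ne_of_gt h1)
    refine ⟨c k, ?_, fun _ => hκ⟩
    have hak : a k = 0 := by rw [ha]; simp [hκ]
    filter_upwards [hconst, hφ_ne] with p h hp
    have := h k
    rw [hak, add_zero] at this
    exact mul_right_cancel₀ hp this
end

section
/- No-go theorem with momentum drift (Theorem 1 of the paper including the bounded unitary drift term): Let N, K ∈ ℕ with K ≥ 1, ℏ > 0, κ_k ∈ ℝ^N and f_k : ℝ^N → ℂ measurable for k = 1,…,K, and let f₀ : ℝ^N → ℝ be measurable. Let φ ∈ L²(ℝ^N, ℂ) with φ(p) ≠ 0 for almost every p. Suppose: (i) Σ_{k=1}^K |f_k(p + ℏκ_k)·φ(p + ℏκ_k)|² = (Σ_{k=1}^K |f_k(p)|²)·|φ(p)|² for almost every p, and (ii) Σ_{k=1}^K f_k(p + ℏκ_k)·φ(p + ℏκ_k)·conj( f_k(p' + ℏκ_k)·φ(p' + ℏκ_k) ) − i·( f₀(p) − f₀(p') )·φ(p)·conj(φ(p'))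 = (1/2)·Σ_{k=1}^K ( |f_k(p)|² + |f_k(p')|² )·φ(p)·conj(φ(p')) for almost every (p, p') ∈ ℝ^N × ℝ^N. Then f₀ is almost everywhere equal to a constant, and for every k there exists c_k ∈ ℂ with f_k = c_k almost everywhere and (c_k ≠ 0 → κ_k = 0); hence the dissipator and the drift generator −i[f₀(p̂), ·] both act trivially. -/
open MeasureTheory

open scoped FourierTransform RealInnerProductSpace

lemma aux_ae_const_of_pair {α β : Type*} [MeasurableSpace α] {μ : Measure α} [SFinite μ]
    (hμ : μ ≠ 0) (g : α → β) (h : ∀ᵐ q ∂(μ.prod μ), g q.1 = g q.2) :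
    ∃ c, ∀ᵐ p ∂μ, g p = c := by
  have h2 : ∀ᵐ p ∂μ, ∀ᵐ p' ∂μ, g p = g p' := Measure.ae_ae_of_ae_prod h
  haveI : (ae μ).NeBot := ae_neBot.mpr hμ
  obtain ⟨p₀, hp₀⟩ := h2.exists
  exact ⟨g p₀, hp₀.mono fun p' hp' => hp'.symm⟩

lemma aux_norm_sub_sq (a b : ℂ) :
    ‖a - b‖ ^ 2 = ‖a‖ ^ 2 + ‖b‖ ^ 2 - 2 * (a * (starRingEnd ℂ) b).re := by
  simp only [Complex.sq_norm, Complex.normSq_apply,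
    Complex.sub_re, Complex.sub_im, Complex.mul_re, Complex.conj_re, Complex.conj_im]
  ring

set_option maxHeartbeats 2000000 in
/-- **No-go theorem with momentum drift** (Theorem 1 of the paper including the bounded
unitary drift term). In the momentum representation, let `φ ∈ L²(ℝ^N, ℂ)` be nonzero
almost everywhere. If the pure state `|φ⟩⟨φ|` is annihilated by the full translation-
invariant relaxation superoperator, consisting of the dissipator `Σ_k D_{A(κ_k, f_k)}`
together with the generalized unitary drift `−i[f₀(p̂), ·]` with real `f₀` — expressed
through the diagonal condition (i) and the kernel identity (ii) — then `f₀` is a.e.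
constant and every `f_k` is a.e. constant, a nonzero constant forcing `κ_k = 0`: both
the dissipator and the drift generator act trivially. -/
theorem no_go_pure_steady_state_with_drift
    (N K : ℕ) (hK : 1 ≤ K) (ℏ : ℝ) (hℏ : 0 < ℏ)
    (κ : Fin K → EuclideanSpace ℝ (Fin N))
    (f : Fin K → EuclideanSpace ℝ (Fin N) → ℂ)
    (hf_meas : ∀ k, Measurable (f k))
    (f₀ : EuclideanSpace ℝ (Fin N) → ℝ) (hf₀_meas : Measurable f₀)
    (φ : EuclideanSpace ℝ (Fin N) → ℂ)
    (hφ_L2 : MemLp φ 2 (volume : Measure (EuclideanSpace ℝ (Fin N))))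
    (hφ_ne : ∀ᵐ p : EuclideanSpace ℝ (Fin N) ∂volume, φ p ≠ 0)
    (hdiag : ∀ᵐ p : EuclideanSpace ℝ (Fin N) ∂volume,
      ∑ k : Fin K, ‖f k (p + ℏ • κ k) * φ (p + ℏ • κ k)‖ ^ 2
        = (∑ k : Fin K, ‖f k p‖ ^ 2) * ‖φ p‖ ^ 2)
    (hker : ∀ᵐ q : EuclideanSpace ℝ (Fin N) × EuclideanSpace ℝ (Fin N)
        ∂(volume.prod volume),
      (∑ k : Fin K, f k (q.1 + ℏ • κ k) * φ (q.1 + ℏ • κ k) *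
          (starRingEnd ℂ) (f k (q.2 + ℏ • κ k) * φ (q.2 + ℏ • κ k)))
        - Complex.I * ((f₀ q.1 - f₀ q.2 : ℝ) : ℂ) * (φ q.1 * (starRingEnd ℂ) (φ q.2))
        = (1 / 2 : ℂ) * ∑ k : Fin K,
            ((‖f k q.1‖ ^ 2 + ‖f k q.2‖ ^ 2 : ℝ) : ℂ) *
              (φ q.1 * (starRingEnd ℂ) (φ q.2))) :
    (∃ c₀ : ℝ, ∀ᵐ p : EuclideanSpace ℝ (Fin N) ∂volume, f₀ p = c₀) ∧
    (∀ k : Fin K, ∃ c : ℂ,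
      (∀ᵐ p : EuclideanSpace ℝ (Fin N) ∂volume, f k p = c) ∧ (c ≠ 0 → κ k = 0)) := by
  classical
  have hμne : (volume : Measure (EuclideanSpace ℝ (Fin N))) ≠ 0 := by
    intro h
    have h1 : (0 : ENNReal) < volume (Set.univ : Set (EuclideanSpace ℝ (Fin N))) :=
      isOpen_univ.measure_pos volume ⟨0, trivial⟩
    rw [h] at h1
    simp at h1
  set v : Fin K → EuclideanSpace ℝ (Fin N) := fun k => ℏ • κ k with hv
  have htrans : ∀ (w : EuclideanSpace ℝ (Fin N)) (P : EuclideanSpace ℝ (Fin N) → Prop),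
      (∀ᵐ p : EuclideanSpace ℝ (Fin N) ∂volume, P p) → ∀ᵐ p : EuclideanSpace ℝ (Fin N) ∂volume, P (p + w) := fun w P h =>
    (measurePreserving_add_right volume w).quasiMeasurePreserving.ae h
  have hfst : ∀ (P : EuclideanSpace ℝ (Fin N) → Prop), (∀ᵐ p : EuclideanSpace ℝ (Fin N) ∂volume, P p) →
      ∀ᵐ q : EuclideanSpace ℝ (Fin N) × EuclideanSpace ℝ (Fin N) ∂(volume.prod volume), P q.1 := fun P h =>
    Measure.quasiMeasurePreserving_fst.ae h
  have hsnd : ∀ (P : EuclideanSpace ℝ (Fin N) → Prop), (∀ᵐ p : EuclideanSpace ℝ (Fin N) ∂volume, P p) →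
      ∀ᵐ q : EuclideanSpace ℝ (Fin N) × EuclideanSpace ℝ (Fin N) ∂(volume.prod volume), P q.2 := fun P h =>
    Measure.quasiMeasurePreserving_snd.ae h
  set U : EuclideanSpace ℝ (Fin N) → Fin K → ℂ := fun p k => f k (p + v k) * φ (p + v k) / φ p with hU
  -- the key pointwise algebra on a conull set of pairs
  have hpair : ∀ᵐ q : EuclideanSpace ℝ (Fin N) × EuclideanSpace ℝ (Fin N) ∂(volume.prod volume),
      (fun p : EuclideanSpace ℝ (Fin N) => (U p, f₀ p)) q.1 = (fun p : EuclideanSpace ℝ (Fin N) => (U p, f₀ p)) q.2 := by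
    filter_upwards [hker, hfst _ hdiag, hsnd _ hdiag, hfst _ hφ_ne, hsnd _ hφ_ne]
      with q hk hd1 hd2 hne1 hne2
    obtain ⟨p, p'⟩ := q
    simp only at hk hd1 hd2 hne1 hne2 ⊢
    have hne1' : (starRingEnd ℂ) (φ p) ≠ 0 := fun h => hne1 (by
      have := congrArg (starRingEnd ℂ) h; simpa using this)
    have hne2' : (starRingEnd ℂ) (φ p') ≠ 0 := fun h => hne2 (by
      have := congrArg (starRingEnd ℂ) h; simpa using this)
    have hD : φ p * (starRingEnd ℂ) (φ p') ≠ 0 := mul_ne_zero hne1 hne2'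
    -- diagonal conditions in terms of U
    have husq1 : ∑ k, ‖U p k‖ ^ 2 = ∑ k, ‖f k p‖ ^ 2 := by
      have : ∀ k : Fin K, ‖U p k‖ ^ 2
          = ‖f k (p + v k) * φ (p + v k)‖ ^ 2 / ‖φ p‖ ^ 2 := by
        intro k; rw [hU]; simp only [norm_div, div_pow]
      rw [Finset.sum_congr rfl fun k _ => this k, ← Finset.sum_div, hd1,
        mul_div_assoc, div_self (pow_ne_zero _ (norm_ne_zero_iff.mpr hne1)), mul_one]
    have husq2 : ∑ k, ‖U p' k‖ ^ 2 = ∑ k, ‖f k p'‖ ^ 2 := by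
      have : ∀ k : Fin K, ‖U p' k‖ ^ 2
          = ‖f k (p' + v k) * φ (p' + v k)‖ ^ 2 / ‖φ p'‖ ^ 2 := by
        intro k; rw [hU]; simp only [norm_div, div_pow]
      rw [Finset.sum_congr rfl fun k _ => this k, ← Finset.sum_div, hd2,
        mul_div_assoc, div_self (pow_ne_zero _ (norm_ne_zero_iff.mpr hne2)), mul_one]
    -- the kernel condition in terms of U
    set S : ℝ := ∑ k, ‖f k p‖ ^ 2 with hSdef
    set S' : ℝ := ∑ k, ‖f k p'‖ ^ 2 with hS'def
    have hz : ∑ k, U p k * (starRingEnd ℂ) (U p' k)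
        = (((S + S') / 2 : ℝ) : ℂ) + Complex.I * ((f₀ p - f₀ p' : ℝ) : ℂ) := by
      have hterm : ∀ k : Fin K, U p k * (starRingEnd ℂ) (U p' k)
            * (φ p * (starRingEnd ℂ) (φ p'))
          = f k (p + v k) * φ (p + v k)
            * (starRingEnd ℂ) (f k (p' + v k) * φ (p' + v k)) := by
        intro k
        rw [hU]
        simp only [map_div₀]
        field_simp
      have hsum : (∑ k, U p k * (starRingEnd ℂ) (U p' k))
            * (φ p * (starRingEnd ℂ) (φ p'))
          = ∑ k, f k (p + v k) * φ (p + v k)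
            * (starRingEnd ℂ) (f k (p' + v k) * φ (p' + v k)) := by
        rw [Finset.sum_mul]; exact Finset.sum_congr rfl fun k _ => hterm k
      have hrhs : (1 / 2 : ℂ) * ∑ k : Fin K,
            ((‖f k p‖ ^ 2 + ‖f k p'‖ ^ 2 : ℝ) : ℂ) * (φ p * (starRingEnd ℂ) (φ p'))
          = (((S + S') / 2 : ℝ) : ℂ) * (φ p * (starRingEnd ℂ) (φ p')) := by
        rw [← Finset.sum_mul, ← mul_assoc]
        congr 1
        rw [hSdef, hS'def]
        push_cast
        rw [← Finset.sum_add_distrib]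
        ring
      have hk' := hk
      rw [hrhs] at hk'
      apply mul_right_cancel₀ hD
      rw [hsum]
      calc ∑ k, f k (p + v k) * φ (p + v k)
            * (starRingEnd ℂ) (f k (p' + v k) * φ (p' + v k))
          = (((S + S') / 2 : ℝ) : ℂ) * (φ p * (starRingEnd ℂ) (φ p'))
            + Complex.I * ((f₀ p - f₀ p' : ℝ) : ℂ) * (φ p * (starRingEnd ℂ) (φ p')) := by
            linear_combination hk'
        _ = _ := by ring
    -- the sum of squared differences vanishes
    have htot : ∑ k, ‖U p k - U p' k‖ ^ 2 = 0 := by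
      have hre : (∑ k, U p k * (starRingEnd ℂ) (U p' k)).re = (S + S') / 2 := by
        rw [hz]; simp
      have hexp : ∑ k, ‖U p k - U p' k‖ ^ 2
          = (∑ k, ‖U p k‖ ^ 2) + (∑ k, ‖U p' k‖ ^ 2)
            - 2 * (∑ k, U p k * (starRingEnd ℂ) (U p' k)).re := by
        rw [Complex.re_sum, Finset.mul_sum, ← Finset.sum_add_distrib,
          ← Finset.sum_sub_distrib]
        exact Finset.sum_congr rfl fun k _ => aux_norm_sub_sq _ _
      rw [hexp, hre, husq1, husq2]
      ring
    have hUk : ∀ k : Fin K, U p k = U p' k := by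
      intro k
      have h0 : ∀ j ∈ Finset.univ, (0:ℝ) ≤ ‖U p j - U p' j‖ ^ 2 :=
        fun j _ => sq_nonneg _
      have := (Finset.sum_eq_zero_iff_of_nonneg h0).mp htot k (Finset.mem_univ k)
      have := pow_eq_zero_iff (n := 2) (by norm_num) |>.mp this
      rwa [norm_eq_zero, sub_eq_zero] at this
    have hf0 : f₀ p = f₀ p' := by
      have him : (∑ k, U p k * (starRingEnd ℂ) (U p' k)).im = f₀ p - f₀ p' := by
        rw [hz]; simp
      have him0 : (∑ k, U p k * (starRingEnd ℂ) (U p' k)).im = 0 := by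
        rw [Finset.sum_congr rfl fun k _ => by rw [← hUk k]]
        rw [Complex.im_sum]
        apply Finset.sum_eq_zero
        intro k _
        rw [Complex.mul_conj]
        simp
      have := him0.symm.trans him
      linarith
    exact Prod.ext (funext hUk) hf0
  obtain ⟨⟨a, c₀⟩, hconst⟩ := aux_ae_const_of_pair hμne (fun p : EuclideanSpace ℝ (Fin N) => (U p, f₀ p)) hpair
  have hU_eq : ∀ᵐ p : EuclideanSpace ℝ (Fin N) ∂volume, U p = a := hconst.mono fun p hp => congrArg Prod.fst hp
  have hf₀_eq : ∀ᵐ p : EuclideanSpace ℝ (Fin N) ∂volume, f₀ p = c₀ := hconst.mono fun p hp => congrArg Prod.snd hp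
  refine ⟨⟨c₀, hf₀_eq⟩, ?_⟩
  -- main relation
  have ha : ∀ᵐ p : EuclideanSpace ℝ (Fin N) ∂volume, ∀ k, f k (p + v k) * φ (p + v k) = a k * φ p := by
    filter_upwards [hU_eq, hφ_ne] with p hp hne k
    have := congrFun hp k
    simp only [hU] at this
    field_simp at this
    linear_combination this
  set s : ℝ := ∑ k, ‖a k‖ ^ 2 with hs
  have hSs : ∀ᵐ p : EuclideanSpace ℝ (Fin N) ∂volume, (∑ k, ‖f k p‖ ^ 2) = s := by
    filter_upwards [hdiag, ha, hφ_ne] with p hd hak hne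
    have h1 : ∑ k, ‖f k (p + v k) * φ (p + v k)‖ ^ 2 = s * ‖φ p‖ ^ 2 := by
      rw [Finset.sum_congr rfl fun k _ => by rw [hak k], hs, Finset.sum_mul]
      exact Finset.sum_congr rfl fun k _ => by rw [norm_mul, mul_pow]
    have h2 := hd.symm.trans h1
    have h3 : ‖φ p‖ ^ 2 ≠ 0 := pow_ne_zero _ (norm_ne_zero_iff.mpr hne)
    exact mul_right_cancel₀ h3 h2
  -- conclusion for each k
  intro k
  by_cases hak0 : a k = 0
  · refine ⟨0, ?_, fun h => absurd rfl h⟩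
    have h1 : ∀ᵐ p : EuclideanSpace ℝ (Fin N) ∂volume, f k (p + v k) * φ (p + v k) = 0 := by
      filter_upwards [ha] with p hp
      rw [hp k, hak0, zero_mul]
    have h2 : ∀ᵐ p : EuclideanSpace ℝ (Fin N) ∂volume, φ (p + v k) ≠ 0 := htrans (v k) _ hφ_ne
    have h3 : ∀ᵐ p : EuclideanSpace ℝ (Fin N) ∂volume, f k (p + v k) = 0 := by
      filter_upwards [h1, h2] with p hp hne
      exact (mul_eq_zero.mp hp).resolve_right hne
    have h4 := htrans (-(v k)) _ h3
    filter_upwards [h4] with p hp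
    simpa [neg_add_cancel_right] using hp
  · -- Fourier argument
    have hκ0 : κ k = 0 := by
      by_contra hκne
      have hvne : v k ≠ 0 := by
        rw [hv]; exact smul_ne_zero (ne_of_gt hℏ) hκne
      -- integrability of |φ|²
      have hInt : Integrable (fun p : EuclideanSpace ℝ (Fin N) => ‖φ p‖ ^ 2) volume := by
        have h1 := hφ_L2.integrable_norm_rpow (by norm_num) (by norm_num)
        refine h1.congr (Filter.Eventually.of_forall fun p => ?_)
        have h2 : ‖φ p‖ ^ ((2 : ENNReal).toReal) = ‖φ p‖ ^ (2 : ℕ) := by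
          rw [show ((2 : ENNReal).toReal) = ((2 : ℕ) : ℝ) by norm_num, Real.rpow_natCast]
        simpa using h2
      have hcInt : Integrable (fun p : EuclideanSpace ℝ (Fin N) => ((‖φ p‖ ^ 2 : ℝ) : ℂ))
          volume := hInt.ofReal
      set hc : EuclideanSpace ℝ (Fin N) → ℂ := fun p => ((‖φ p‖ ^ 2 : ℝ) : ℂ) with hhc
      -- translated pointwise relation
      have hk2 : ∀ j : Fin K, ∀ᵐ q : EuclideanSpace ℝ (Fin N) ∂volume,
          ‖f j q‖ ^ 2 * ‖φ q‖ ^ 2 = ‖a j‖ ^ 2 * ‖φ (q - v j)‖ ^ 2 := by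
        intro j
        have h1 : ∀ᵐ p : EuclideanSpace ℝ (Fin N) ∂volume,
            ‖f j (p + v j)‖ ^ 2 * ‖φ (p + v j)‖ ^ 2 = ‖a j‖ ^ 2 * ‖φ p‖ ^ 2 := by
          filter_upwards [ha] with p hp
          have h2 := congrArg (fun z : ℂ => ‖z‖ ^ 2) (hp j)
          simpa [norm_mul, mul_pow] using h2
        have h2 := htrans (-(v j)) _ h1
        filter_upwards [h2] with q hq
        rw [neg_add_cancel_right] at hq
        rw [← sub_eq_add_neg] at hq
        exact hq
      have hconv : ∀ᵐ q : EuclideanSpace ℝ (Fin N) ∂volume,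
          ∑ j, ‖a j‖ ^ 2 * ‖φ (q - v j)‖ ^ 2 = s * ‖φ q‖ ^ 2 := by
        have hall : ∀ᵐ q : EuclideanSpace ℝ (Fin N) ∂volume, ∀ j : Fin K,
            ‖f j q‖ ^ 2 * ‖φ q‖ ^ 2 = ‖a j‖ ^ 2 * ‖φ (q - v j)‖ ^ 2 :=
          (ae_all_iff).mpr hk2
        filter_upwards [hall, hSs] with q hq hS
        rw [← Finset.sum_congr rfl fun j _ => hq j, ← Finset.sum_mul, hS]
      -- the character functions
      set e : EuclideanSpace ℝ (Fin N) → EuclideanSpace ℝ (Fin N) → ℂ :=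
        fun ξ w => Complex.exp (((-2 * Real.pi * ⟪w, ξ⟫ : ℝ) : ℂ) * Complex.I) with he
      have he_norm : ∀ ξ w, ‖e ξ w‖ = 1 := by
        intro ξ w
        rw [he]
        exact Complex.norm_exp_ofReal_mul_I _
      have he_cont : ∀ ξ, Continuous (fun w => e ξ w) := by
        intro ξ
        rw [he]
        exact Complex.continuous_exp.comp
          (((Complex.continuous_ofReal.comp
            ((continuous_const.mul (continuous_id.inner continuous_const))))).mul
            continuous_const)
      have he_add : ∀ ξ q w, e ξ (q + w) = e ξ q * e ξ w := by
        intro ξ q w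
        rw [he]
        simp only
        rw [← Complex.exp_add]
        congr 1
        rw [inner_add_left]
        push_cast
        ring
      -- the Fourier transform
      set F : EuclideanSpace ℝ (Fin N) → ℂ :=
        fun ξ => ∫ q : EuclideanSpace ℝ (Fin N), e ξ q * hc q with hFdef
      have hF𝓕 : F = FourierTransform.fourier hc := by
        funext ξ
        rw [hFdef, Real.fourier_eq']
        simp only [smul_eq_mul, he]
      have hFcont : Continuous F := by
        rw [hF𝓕]
        exact VectorFourier.fourierIntegral_continuous (L := innerₗ (EuclideanSpace ℝ (Fin N))) Real.continuous_fourierChar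
          (by exact continuous_inner) hcInt
      -- integrability of the integrands
      have hprod_int : ∀ (ξ w : EuclideanSpace ℝ (Fin N)),
          Integrable (fun q => e ξ q * hc (q - w)) volume := by
        intro ξ w
        exact (hcInt.comp_sub_right w).bdd_mul ((he_cont ξ).aestronglyMeasurable)
          (Filter.Eventually.of_forall fun q => le_of_eq (he_norm ξ q))
      -- the shift identity
      have hshift : ∀ (ξ w : EuclideanSpace ℝ (Fin N)),
          (∫ q : EuclideanSpace ℝ (Fin N), e ξ q * hc (q - w)) = e ξ w * F ξ := by
        intro ξ w
        have h1 : (∫ q : EuclideanSpace ℝ (Fin N), e ξ q * hc (q - w))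
            = ∫ q : EuclideanSpace ℝ (Fin N), e ξ (q + w) * hc (q + w - w) :=
          (integral_add_right_eq_self (fun q => e ξ q * hc (q - w)) w).symm
        rw [h1]
        have h2 : ∀ q : EuclideanSpace ℝ (Fin N),
            e ξ (q + w) * hc (q + w - w) = e ξ w * (e ξ q * hc q) := by
          intro q
          rw [add_sub_cancel_right, he_add]
          ring
        simp_rw [h2]
        rw [integral_const_mul, hFdef]
      -- main identity
      have hmain : ∀ ξ : EuclideanSpace ℝ (Fin N),
          ((s : ℝ) : ℂ) * F ξ = (∑ j, ((‖a j‖ ^ 2 : ℝ) : ℂ) * e ξ (v j)) * F ξ := by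
        intro ξ
        have hA : ((s : ℝ) : ℂ) * F ξ
            = ∫ q : EuclideanSpace ℝ (Fin N), e ξ q * ((s * ‖φ q‖ ^ 2 : ℝ) : ℂ) := by
          rw [hFdef, ← integral_const_mul]
          congr 1
          funext q
          rw [hhc]
          push_cast
          ring
        have hB : (∫ q : EuclideanSpace ℝ (Fin N),
              e ξ q * ((∑ j, ‖a j‖ ^ 2 * ‖φ (q - v j)‖ ^ 2 : ℝ) : ℂ))
            = ∑ j, ((‖a j‖ ^ 2 : ℝ) : ℂ) * (e ξ (v j) * F ξ) := by
          have h1 : ∀ q : EuclideanSpace ℝ (Fin N),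
              e ξ q * ((∑ j, ‖a j‖ ^ 2 * ‖φ (q - v j)‖ ^ 2 : ℝ) : ℂ)
              = ∑ j, ((‖a j‖ ^ 2 : ℝ) : ℂ) * (e ξ q * hc (q - v j)) := by
            intro q
            rw [hhc]
            push_cast
            rw [Finset.mul_sum]
            exact Finset.sum_congr rfl fun j _ => by ring
          simp_rw [h1]
          rw [integral_finset_sum]
          · exact Finset.sum_congr rfl fun j _ => by
              rw [integral_const_mul, hshift ξ (v j)]
          · exact fun j _ => (hprod_int ξ (v j)).const_mul _
        have hAB : ((s : ℝ) : ℂ) * F ξ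
            = ∑ j, ((‖a j‖ ^ 2 : ℝ) : ℂ) * (e ξ (v j) * F ξ) := by
          rw [hA, ← hB]
          apply integral_congr_ae
          filter_upwards [hconv] with q hq
          rw [hq]
        rw [hAB, Finset.sum_mul]
        exact Finset.sum_congr rfl fun j _ => by ring
      -- F is nonzero at the origin
      have hF0 : F 0 ≠ 0 := by
        have h1 : F 0 = ((∫ q : EuclideanSpace ℝ (Fin N), ‖φ q‖ ^ 2) : ℝ) := by
          rw [hFdef]
          have h2 : ∀ q : EuclideanSpace ℝ (Fin N), e 0 q * hc q = hc q := by
            intro q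
            rw [he]
            simp [inner_zero_right]
          simp_rw [h2, hhc]
          exact integral_ofReal
        have hpos : 0 < ∫ q : EuclideanSpace ℝ (Fin N), ‖φ q‖ ^ 2 := by
          rcases lt_or_eq_of_le (integral_nonneg (f := fun q => ‖φ q‖ ^ 2) fun q => sq_nonneg ‖φ q‖) with h | h
          · exact h
          · exfalso
            have h3 := (integral_eq_zero_iff_of_nonneg_ae
              (Filter.Eventually.of_forall fun q => sq_nonneg ‖φ q‖) hInt).mp h.symm
            haveI : (ae (volume : Measure (EuclideanSpace ℝ (Fin N)))).NeBot :=
              ae_neBot.mpr hμne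
            obtain ⟨q, hq1, hq2⟩ := (h3.and hφ_ne).exists
            exact hq2 (norm_eq_zero.mp (pow_eq_zero_iff (n := 2) (by norm_num) |>.mp hq1))
        rw [h1]
        exact_mod_cast ne_of_gt hpos
      -- F is nonzero near the origin
      obtain ⟨ε, hε, hball⟩ : ∃ ε > 0, ∀ ⦃ξ : EuclideanSpace ℝ (Fin N)⦄,
          dist ξ 0 < ε → F ξ ≠ 0 := by
        have h1 : ∀ᶠ ξ in nhds (0 : EuclideanSpace ℝ (Fin N)), F ξ ≠ 0 :=
          (hFcont.continuousAt).eventually_ne hF0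
        exact Metric.eventually_nhds_iff.mp h1
      -- the cosine identity
      have hcos : ∀ ⦃ξ : EuclideanSpace ℝ (Fin N)⦄, dist ξ 0 < ε →
          s = ∑ j, ‖a j‖ ^ 2 * Real.cos (2 * Real.pi * ⟪v j, ξ⟫) := by
        intro ξ hξ
        have hcancel : ((s : ℝ) : ℂ) = ∑ j, ((‖a j‖ ^ 2 : ℝ) : ℂ) * e ξ (v j) :=
          mul_right_cancel₀ (hball hξ) (hmain ξ)
        have h1 := congrArg Complex.re hcancel
        rw [Complex.ofReal_re, Complex.re_sum] at h1
        rw [h1]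
        refine Finset.sum_congr rfl fun j _ => ?_
        rw [Complex.re_ofReal_mul]
        congr 1
        rw [he]
        simp only
        rw [Complex.exp_ofReal_mul_I_re,
          show (-2 * Real.pi * ⟪v j, ξ⟫) = -(2 * Real.pi * ⟪v j, ξ⟫) by ring,
          Real.cos_neg]
      have hcos1 : ∀ ⦃ξ : EuclideanSpace ℝ (Fin N)⦄, dist ξ 0 < ε →
          Real.cos (2 * Real.pi * ⟪v k, ξ⟫) = 1 := by
        intro ξ hξ
        have h1 : ∑ j, ‖a j‖ ^ 2 * (1 - Real.cos (2 * Real.pi * ⟪v j, ξ⟫)) = 0 := by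
          simp_rw [mul_sub, mul_one]
          rw [Finset.sum_sub_distrib, ← hs, ← hcos hξ, sub_self]
        have h2 : ∀ j ∈ Finset.univ, (0:ℝ) ≤ ‖a j‖ ^ 2
            * (1 - Real.cos (2 * Real.pi * ⟪v j, ξ⟫)) := fun j _ =>
          mul_nonneg (sq_nonneg _) (by linarith [Real.cos_le_one (2 * Real.pi * ⟪v j, ξ⟫)])
        have h3 := (Finset.sum_eq_zero_iff_of_nonneg h2).mp h1 k (Finset.mem_univ k)
        have h4 : ‖a k‖ ^ 2 ≠ 0 := pow_ne_zero _ (norm_ne_zero_iff.mpr hak0)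
        have h5 := (mul_eq_zero.mp h3).resolve_left h4
        linarith
      -- choose a test frequency
      have hnv : 0 < ‖v k‖ := norm_pos_iff.mpr hvne
      set t : ℝ := min (ε / (2 * ‖v k‖)) (1 / (2 * ‖v k‖ ^ 2)) with htdef
      have ht : 0 < t := lt_min (by positivity) (by positivity)
      have hξdist : dist (t • v k) 0 < ε := by
        rw [dist_zero_right, norm_smul, Real.norm_eq_abs, abs_of_pos ht]
        have h1 : t ≤ ε / (2 * ‖v k‖) := min_le_left _ _
        have h2 : t * ‖v k‖ ≤ (ε / (2 * ‖v k‖)) * ‖v k‖ := by nlinarith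
        have h3 : (ε / (2 * ‖v k‖)) * ‖v k‖ = ε / 2 := by field_simp
        linarith
      have hinner : ⟪v k, t • v k⟫ = t * ‖v k‖ ^ 2 := by
        rw [real_inner_smul_right, real_inner_self_eq_norm_sq]
      have hcosk := hcos1 hξdist
      rw [hinner] at hcosk
      have hxpos : 0 < 2 * Real.pi * (t * ‖v k‖ ^ 2) := by positivity
      have hxlt : 2 * Real.pi * (t * ‖v k‖ ^ 2) < 2 * Real.pi := by
        have h2 : t ≤ 1 / (2 * ‖v k‖ ^ 2) := min_le_right _ _
        have h3 : t * ‖v k‖ ^ 2 ≤ (1 / (2 * ‖v k‖ ^ 2)) * ‖v k‖ ^ 2 := by nlinarith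
        have h4 : (1 / (2 * ‖v k‖ ^ 2)) * ‖v k‖ ^ 2 = 1 / 2 := by field_simp
        nlinarith [Real.pi_pos]
      have h6 := (Real.cos_eq_one_iff_of_lt_of_lt
        (by nlinarith [Real.pi_pos]) hxlt).mp hcosk
      linarith
    refine ⟨a k, ?_, fun _ => hκ0⟩
    have hvk : v k = 0 := by rw [hv]; simp [hκ0]
    filter_upwards [ha, hφ_ne] with p hp hne
    have := hp k
    rw [hvk, add_zero] at this
    exact mul_right_cancel₀ hne this
end

section
/- Rank-one rigidity of vector-valued correlation kernels: Let N, K ∈ ℕ with K ≥ 1, let u : ℝ^N → ℂ^K and h : ℝ^N → ℂ be measurable, with h(p) ≠ 0 for almost every p. Suppose that for almost every (p, p') ∈ ℝ^N × ℝ^N one has Σ_{k=1}^K u_k(p)·conj(u_k(p')) = h(p)·conj(h(p')), and that ‖u(p)‖² = |h(p)|² for almost every p. Then there exists a fixed unit vector e ∈ ℂ^K such that u(p) = h(p)·e for almost every p ∈ ℝ^N. -/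
open MeasureTheory

lemma vec_eq_of_inner {K : ℕ} (a b : Fin K → ℂ)
    (ha : ∑ k : Fin K, Complex.normSq (a k) = 1)
    (hb : ∑ k : Fin K, Complex.normSq (b k) = 1)
    (hab : ∑ k : Fin K, a k * (starRingEnd ℂ) (b k) = 1) : a = b := by
  have hsum : ∑ k : Fin K, Complex.normSq (a k - b k) = 0 := by
    have : ∀ k : Fin K, Complex.normSq (a k - b k)
        = Complex.normSq (a k) + Complex.normSq (b k)
          - 2 * (a k * (starRingEnd ℂ) (b k)).re := fun k => Complex.normSq_sub _ _
    rw [Finset.sum_congr rfl fun k _ => this k]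
    rw [Finset.sum_sub_distrib, Finset.sum_add_distrib, ha, hb, ← Finset.mul_sum,
      ← Complex.re_sum, hab]
    norm_num
  have hz : ∀ k ∈ Finset.univ, Complex.normSq (a k - b k) = 0 :=
    (Finset.sum_eq_zero_iff_of_nonneg fun k _ => Complex.normSq_nonneg _).mp hsum
  funext k
  have := hz k (Finset.mem_univ k)
  have := Complex.normSq_eq_zero.mp this
  exact sub_eq_zero.mp this

/-- **Rank-one rigidity of vector-valued correlation kernels** (the Cauchy–Schwarz
equality-case step in the proof of the paper's no-go theorems). If the measurable
vector field `u : ℝ^N → ℂ^K` satisfies the kernel identity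
`Σ_k u_k(p)·conj(u_k(p')) = h(p)·conj(h(p'))` a.e. on `ℝ^N × ℝ^N` and the norm identity
`‖u(p)‖² = |h(p)|²` a.e., where `h` is measurable and a.e. nonzero, then there is a
fixed unit vector `e ∈ ℂ^K` with `u(p) = h(p)·e` almost everywhere. -/
theorem rank_one_rigidity
    (N K : ℕ) (hK : 1 ≤ K)
    (u : EuclideanSpace ℝ (Fin N) → (Fin K → ℂ)) (hu_meas : Measurable u)
    (h : EuclideanSpace ℝ (Fin N) → ℂ) (hh_meas : Measurable h)
    (hh_ne : ∀ᵐ p : EuclideanSpace ℝ (Fin N) ∂volume, h p ≠ 0)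
    (hker : ∀ᵐ q : EuclideanSpace ℝ (Fin N) × EuclideanSpace ℝ (Fin N)
        ∂(volume.prod volume),
      ∑ k : Fin K, u q.1 k * (starRingEnd ℂ) (u q.2 k)
        = h q.1 * (starRingEnd ℂ) (h q.2))
    (hnorm : ∀ᵐ p : EuclideanSpace ℝ (Fin N) ∂volume,
      ∑ k : Fin K, ‖u p k‖ ^ 2 = ‖h p‖ ^ 2) :
    ∃ e : Fin K → ℂ, (∑ k : Fin K, ‖e k‖ ^ 2 = 1) ∧
      ∀ᵐ p : EuclideanSpace ℝ (Fin N) ∂volume, ∀ k : Fin K, u p k = h p * e k := by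
  classical
  set v : EuclideanSpace ℝ (Fin N) → Fin K → ℂ := fun p k => u p k / h p with hv
  have hP : ∀ᵐ p : EuclideanSpace ℝ (Fin N) ∂volume,
      h p ≠ 0 ∧ ∑ k : Fin K, ‖u p k‖ ^ 2 = ‖h p‖ ^ 2 := hh_ne.and hnorm
  have hunit : ∀ p : EuclideanSpace ℝ (Fin N),
      (h p ≠ 0 ∧ ∑ k : Fin K, ‖u p k‖ ^ 2 = ‖h p‖ ^ 2) →
      ∑ k : Fin K, Complex.normSq (v p k) = 1 := by
    rintro p ⟨hp0, hpn⟩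
    have hhn : ‖h p‖ ≠ 0 := norm_ne_zero_iff.mpr hp0
    have hterm : ∀ k : Fin K, Complex.normSq (v p k) = ‖u p k‖ ^ 2 / ‖h p‖ ^ 2 := by
      intro k
      rw [← Complex.sq_norm, hv]
      simp [norm_div, div_pow]
    rw [Finset.sum_congr rfl fun k _ => hterm k, ← Finset.sum_div, hpn,
      div_self (pow_ne_zero 2 hhn)]
  have hfst : ∀ᵐ q : EuclideanSpace ℝ (Fin N) × EuclideanSpace ℝ (Fin N)
      ∂(volume.prod volume),
      h q.1 ≠ 0 ∧ ∑ k : Fin K, ‖u q.1 k‖ ^ 2 = ‖h q.1‖ ^ 2 :=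
    Measure.quasiMeasurePreserving_fst.ae hP
  have hsnd : ∀ᵐ q : EuclideanSpace ℝ (Fin N) × EuclideanSpace ℝ (Fin N)
      ∂(volume.prod volume),
      h q.2 ≠ 0 ∧ ∑ k : Fin K, ‖u q.2 k‖ ^ 2 = ‖h q.2‖ ^ 2 :=
    Measure.quasiMeasurePreserving_snd.ae hP
  have hprod : ∀ᵐ q : EuclideanSpace ℝ (Fin N) × EuclideanSpace ℝ (Fin N)
      ∂(volume.prod volume), v q.1 = v q.2 := by
    filter_upwards [hker, hfst, hsnd] with q hkq h1 h2
    apply vec_eq_of_inner _ _ (hunit _ h1) (hunit _ h2)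
    have hd : h q.1 * (starRingEnd ℂ) (h q.2) ≠ 0 :=
      mul_ne_zero h1.1 ((map_ne_zero _).mpr h2.1)
    have hterm : ∀ k : Fin K, v q.1 k * (starRingEnd ℂ) (v q.2 k)
        = (u q.1 k * (starRingEnd ℂ) (u q.2 k)) / (h q.1 * (starRingEnd ℂ) (h q.2)) := by
      intro k
      simp only [hv, map_div₀]
      ring
    rw [Finset.sum_congr rfl fun k _ => hterm k, ← Finset.sum_div, hkq, div_self hd]
  have hslice : ∀ᵐ p : EuclideanSpace ℝ (Fin N) ∂volume,
      ∀ᵐ p' : EuclideanSpace ℝ (Fin N) ∂volume, v p = v p' :=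
    Measure.ae_ae_of_ae_prod hprod
  have hne : (volume : Measure (EuclideanSpace ℝ (Fin N))) ≠ 0 := by
    intro h0
    exact isOpen_univ.measure_ne_zero volume Set.univ_nonempty (by rw [h0]; simp)
  have hne' : (MeasureTheory.ae (volume : Measure (EuclideanSpace ℝ (Fin N)))).NeBot :=
    ae_neBot.mpr hne
  obtain ⟨p₀, hp₀, hsl⟩ := (hP.and hslice).exists
  refine ⟨v p₀, ?_, ?_⟩
  · rw [← hunit p₀ hp₀]
    refine Finset.sum_congr rfl fun k _ => ?_
    rw [← Complex.sq_norm]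
  · filter_upwards [hP, hsl] with p hp hvp
    intro k
    have hvk : u p k / h p = u p₀ k / h p₀ := by
      have := congrFun hvp k; rw [hv] at this; exact this.symm
    have hvv : v p₀ k = u p₀ k / h p₀ := by rw [hv]
    rw [hvv, ← hvk, mul_comm, div_mul_cancel₀ _ hp.1]
end

section
/- Constancy of the total jump rate (intermediate step in the proof of Theorem 1): Let N, K ∈ ℕ with K ≥ 1, ℏ > 0, κ_k ∈ ℝ^N and f_k : ℝ^N → ℂ measurable for k = 1,…,K, and let φ ∈ L²(ℝ^N, ℂ) with φ(p) ≠ 0 for almost every p. Suppose conditions (i) and (ii) hold: (i) Σ_k |f_k(p + ℏκ_k)·φ(p + ℏκ_k)|² = S(p)·|φ(p)|² for almost every p, where S(p) := Σ_{k=1}^K |f_k(p)|², and (ii) Σ_k f_k(p + ℏκ_k)·φ(p + ℏκ_k)·conj( f_k(p' + ℏκ_k)·φ(p' + ℏκ_k) ) = (1/2)·( S(p) + S(p') )·φ(p)·conj(φ(p')) for almost every (p, p'). Then S is almost everywhere equal to a constant. -/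
open MeasureTheory

/-- **Constancy of the total jump rate** (intermediate step in the proof of Theorem 1).
In the momentum representation, if the pure state with a.e.-nonvanishing momentum
wavefunction `φ ∈ L²(ℝ^N, ℂ)` is annihilated by the translation-invariant Lindblad
dissipator `Σ_k D_{A(κ_k, f_k)}` — conditions (i) and (ii) — then the total
momentum-dependent jump rate `S(p) = Σ_k |f_k(p)|²` is almost everywhere constant. -/
theorem total_jump_rate_constant
    (N K : ℕ) (hK : 1 ≤ K) (ℏ : ℝ) (hℏ : 0 < ℏ)
    (κ : Fin K → EuclideanSpace ℝ (Fin N))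
    (f : Fin K → EuclideanSpace ℝ (Fin N) → ℂ)
    (hf_meas : ∀ k, Measurable (f k))
    (φ : EuclideanSpace ℝ (Fin N) → ℂ)
    (hφ_L2 : MemLp φ 2 (volume : Measure (EuclideanSpace ℝ (Fin N))))
    (hφ_ne : ∀ᵐ p : EuclideanSpace ℝ (Fin N) ∂volume, φ p ≠ 0)
    (hdiag : ∀ᵐ p : EuclideanSpace ℝ (Fin N) ∂volume,
      ∑ k : Fin K, ‖f k (p + ℏ • κ k) * φ (p + ℏ • κ k)‖ ^ 2
        = (∑ k : Fin K, ‖f k p‖ ^ 2) * ‖φ p‖ ^ 2)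
    (hker : ∀ᵐ q : EuclideanSpace ℝ (Fin N) × EuclideanSpace ℝ (Fin N)
        ∂(volume.prod volume),
      ∑ k : Fin K, f k (q.1 + ℏ • κ k) * φ (q.1 + ℏ • κ k) *
          (starRingEnd ℂ) (f k (q.2 + ℏ • κ k) * φ (q.2 + ℏ • κ k))
        = (1 / 2 : ℂ) * (((∑ k : Fin K, ‖f k q.1‖ ^ 2) + ∑ k : Fin K, ‖f k q.2‖ ^ 2 : ℝ) : ℂ) *
            (φ q.1 * (starRingEnd ℂ) (φ q.2))) :
    ∃ C : ℝ, ∀ᵐ p : EuclideanSpace ℝ (Fin N) ∂volume,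
      (∑ k : Fin K, ‖f k p‖ ^ 2) = C := by
  set μ : Measure (EuclideanSpace ℝ (Fin N)) := volume
  set S : EuclideanSpace ℝ (Fin N) → ℝ := fun p => ∑ k : Fin K, ‖f k p‖ ^ 2 with hSdef
  have hSnn : ∀ p, 0 ≤ S p := fun p => Finset.sum_nonneg fun k _ => by positivity
  -- lift a.e. facts to the product measure
  have hfst := (Measure.quasiMeasurePreserving_fst (μ := μ) (ν := μ)).tendsto_ae
  have hsnd := (Measure.quasiMeasurePreserving_snd (μ := μ) (ν := μ)).tendsto_ae
  have key : ∀ᵐ q : EuclideanSpace ℝ (Fin N) × EuclideanSpace ℝ (Fin N) ∂(μ.prod μ),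
      S q.1 = S q.2 := by
    filter_upwards [hker, hfst.eventually hφ_ne, hsnd.eventually hφ_ne,
      hfst.eventually hdiag, hsnd.eventually hdiag] with q hk h1 h2 hd1 hd2
    set a : Fin K → ℂ := fun k => f k (q.1 + ℏ • κ k) * φ (q.1 + ℏ • κ k) with ha
    set b : Fin K → ℂ := fun k => f k (q.2 + ℏ • κ k) * φ (q.2 + ℏ • κ k) with hb
    -- Cauchy–Schwarz
    have hcs1 : ‖∑ k : Fin K, a k * (starRingEnd ℂ) (b k)‖ ≤ ∑ k : Fin K, ‖a k‖ * ‖b k‖ := by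
      refine (norm_sum_le _ _).trans (le_of_eq ?_)
      simp [norm_mul]
    have hcs2 : (∑ k : Fin K, ‖a k‖ * ‖b k‖) ^ 2
        ≤ (∑ k : Fin K, ‖a k‖ ^ 2) * ∑ k : Fin K, ‖b k‖ ^ 2 :=
      Finset.sum_mul_sq_le_sq_mul_sq _ _ _
    have hnn : 0 ≤ S q.1 + S q.2 := add_nonneg (hSnn _) (hSnn _)
    have hL : ‖∑ k : Fin K, a k * (starRingEnd ℂ) (b k)‖
        = (1 / 2) * (S q.1 + S q.2) * (‖φ q.1‖ * ‖φ q.2‖) := by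
      rw [hk]
      have e1 : ‖(1 / 2 : ℂ)‖ = 1 / 2 := by norm_num
      have e2 : ‖((∑ k : Fin K, ‖f k q.1‖ ^ 2 + ∑ k : Fin K, ‖f k q.2‖ ^ 2 : ℝ) : ℂ)‖
          = S q.1 + S q.2 := by
        rw [Complex.norm_real]; exact abs_of_nonneg hnn
      rw [norm_mul, norm_mul, norm_mul, RCLike.norm_conj, e1, e2]
    have hfin : ((1 / 2) * (S q.1 + S q.2) * (‖φ q.1‖ * ‖φ q.2‖)) ^ 2
        ≤ (S q.1 * ‖φ q.1‖ ^ 2) * (S q.2 * ‖φ q.2‖ ^ 2) := by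
      rw [← hL, ← hd1, ← hd2]
      calc ‖∑ k : Fin K, a k * (starRingEnd ℂ) (b k)‖ ^ 2
          ≤ (∑ k : Fin K, ‖a k‖ * ‖b k‖) ^ 2 := by
            exact pow_le_pow_left₀ (norm_nonneg _) hcs1 2
        _ ≤ _ := hcs2
    have hp1 : 0 < ‖φ q.1‖ := norm_pos_iff.mpr h1
    have hp2 : 0 < ‖φ q.2‖ := norm_pos_iff.mpr h2
    have hpos : 0 < ‖φ q.1‖ ^ 2 * ‖φ q.2‖ ^ 2 := by positivity
    have h0 : (S q.1 - S q.2) ^ 2 * (‖φ q.1‖ ^ 2 * ‖φ q.2‖ ^ 2) ≤ 0 := by nlinarith [hfin]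
    have hsq : (S q.1 - S q.2) ^ 2 = 0 := by
      refine le_antisymm ?_ (sq_nonneg _)
      nlinarith [h0, hpos, sq_nonneg (S q.1 - S q.2)]
    have := (pow_eq_zero_iff two_ne_zero).mp hsq
    linarith [sub_eq_zero.mp this]
  have hμ : μ ≠ 0 := by
    intro h
    have := isOpen_univ.measure_pos μ (Set.univ_nonempty)
    simp [h] at this
  have hne : (ae μ).NeBot := ae_neBot.mpr hμ
  obtain ⟨p₀, hp₀⟩ := (Measure.ae_ae_of_ae_prod key).exists
  exact ⟨S p₀, hp₀.mono fun p h => h.symm⟩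
end

section
/- Weighted translations with constant-modulus weight have no eigenvectors: Let N ∈ ℕ, ℏ > 0, κ ∈ ℝ^N with κ ≠ 0, c > 0, and let f : ℝ^N → ℂ be measurable with |f(p)| = c for almost every p. Define the bounded operator A on L²(ℝ^N, ℂ) by (Aψ)(p) = f(p + ℏκ)·ψ(p + ℏκ). Then A has no eigenvectors: for every μ ∈ ℂ and φ ∈ L²(ℝ^N, ℂ), if Aφ = μφ then φ = 0 almost everywhere. -/
open MeasureTheory Filter

/-- **Weighted translations with constant-modulus weight have no eigenvectors.**
In the momentum representation, the translation-invariant Lindblad jump operator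
`(Aψ)(p) = f(p + ℏκ)·ψ(p + ℏκ)` with nonzero recoil momentum `ℏκ` and amplitude `f` of
constant modulus `c > 0` admits no eigenvector in `L²(ℝ^N, ℂ)`: if `Aφ = μφ` (as an
a.e. identity of momentum wavefunctions) for some `μ ∈ ℂ` and `φ ∈ L²`, then `φ = 0`
almost everywhere. -/
theorem weighted_translation_no_eigenvector
    (N : ℕ) (ℏ : ℝ) (hℏ : 0 < ℏ)
    (κ : EuclideanSpace ℝ (Fin N)) (hκ : κ ≠ 0)
    (c : ℝ) (hc : 0 < c)
    (f : EuclideanSpace ℝ (Fin N) → ℂ) (hf_meas : Measurable f)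
    (hf_mod : ∀ᵐ p : EuclideanSpace ℝ (Fin N) ∂volume, ‖f p‖ = c)
    (μ : ℂ) (φ : EuclideanSpace ℝ (Fin N) → ℂ)
    (hφ_L2 : MemLp φ 2 (volume : Measure (EuclideanSpace ℝ (Fin N))))
    (heig : (fun p : EuclideanSpace ℝ (Fin N) => f (p + ℏ • κ) * φ (p + ℏ • κ))
      =ᵐ[volume] fun p => μ * φ p) :
    ∀ᵐ p : EuclideanSpace ℝ (Fin N) ∂volume, φ p = 0 := by
  classical
  set a : EuclideanSpace ℝ (Fin N) := ℏ • κ with ha_def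
  have ha_ne : a ≠ 0 := smul_ne_zero hℏ.ne' hκ
  have ha_pos : 0 < ‖a‖ := norm_pos_iff.2 ha_ne
  have hmp : ∀ v : EuclideanSpace ℝ (Fin N),
      MeasurePreserving (· + v) (volume : Measure (EuclideanSpace ℝ (Fin N))) volume :=
    fun v => measurePreserving_add_right volume v
  have hfa : ∀ᵐ p : EuclideanSpace ℝ (Fin N) ∂volume, ‖f (p + a)‖ = c :=
    (hmp a).quasiMeasurePreserving.tendsto_ae.eventually hf_mod
  set r : ℝ := ‖μ‖ / c with hr_def
  set h : EuclideanSpace ℝ (Fin N) → ℝ := fun p => ‖φ p‖ ^ 2 with hh_def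
  have hh_nonneg : ∀ p, 0 ≤ h p := fun p => sq_nonneg _
  have hh_int : Integrable h volume := by
    have := hφ_L2.integrable_norm_rpow (by norm_num) (by norm_num)
    have h2 : ((2 : ENNReal)).toReal = (2 : ℝ) := by norm_num
    rw [h2] at this
    refine this.congr (Eventually.of_forall fun p => ?_)
    rw [hh_def]
    simp only
    rw [← Real.rpow_natCast ‖φ p‖ 2]
    norm_num
  have hh_meas : AEStronglyMeasurable h volume := hh_int.aestronglyMeasurable
  -- key a.e. relation
  have hkey : ∀ᵐ p : EuclideanSpace ℝ (Fin N) ∂volume, h (p + a) = r ^ 2 * h p := by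
    filter_upwards [heig, hfa] with p hp hfp
    have h1 : ‖f (p + a) * φ (p + a)‖ = ‖μ * φ p‖ := by rw [hp]
    rw [norm_mul, norm_mul, hfp] at h1
    have h2 : ‖φ (p + a)‖ = r * ‖φ p‖ := by
      rw [hr_def, div_mul_eq_mul_div, eq_comm, div_eq_iff hc.ne']
      linarith
    rw [hh_def]
    simp only
    rw [h2]
    ring
  -- suffices h = 0 a.e.
  suffices hsuff : ∀ᵐ p : EuclideanSpace ℝ (Fin N) ∂volume, h p = 0 by
    filter_upwards [hsuff] with p hp
    have : ‖φ p‖ = 0 := by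
      have := hp
      rw [hh_def] at this
      simpa [pow_eq_zero_iff] using this
    exact norm_eq_zero.mp this
  have hint_eq : ∫ p, h p = r ^ 2 * ∫ p, h p := by
    have h1 : ∫ p, h (p + a) = ∫ p, h p := integral_add_right_eq_self h a
    have h2 : ∫ p, h (p + a) = ∫ p, r ^ 2 * h p := integral_congr_ae hkey
    rw [integral_const_mul] at h2
    linarith
  by_cases hr1 : r ^ 2 = 1
  · -- periodic case
    have hper : ∀ᵐ p : EuclideanSpace ℝ (Fin N) ∂volume, h (p + a) = h p := by
      filter_upwards [hkey] with p hp
      rw [hp, hr1, one_mul]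
    have hpern : ∀ n : ℕ, ∀ᵐ p : EuclideanSpace ℝ (Fin N) ∂volume, h (p + n • a) = h p := by
      intro n
      induction n with
      | zero => simp
      | succ n ih =>
        have ih' : ∀ᵐ p : EuclideanSpace ℝ (Fin N) ∂volume, h (p + a + n • a) = h (p + a) :=
          (hmp a).quasiMeasurePreserving.tendsto_ae.eventually ih
        filter_upwards [ih', hper] with p h1 h2
        have heq : p + (n + 1) • a = p + a + n • a := by
          rw [succ_nsmul]
          abel
        rw [heq, h1, h2]
    have hB : ∀ R : ℕ, ∀ᵐ p : EuclideanSpace ℝ (Fin N) ∂volume,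
        p ∈ Metric.ball (0 : EuclideanSpace ℝ (Fin N)) (R : ℝ) → h p = 0 := by
      intro R
      set B : Set (EuclideanSpace ℝ (Fin N)) := Metric.ball 0 (R : ℝ) with hB_def
      have hBmeas : MeasurableSet B := measurableSet_ball
      set F : ℕ → EuclideanSpace ℝ (Fin N) → ℝ :=
        fun n p => Set.indicator ((· + n • a) ⁻¹' B) h p with hF_def
      have claim1 : ∀ n : ℕ, ∫ p, F n p = ∫ p, Set.indicator B h p := by
        intro n
        have e1 : ∫ p, Set.indicator B h p = ∫ p, Set.indicator B h (p + n • a) :=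
          (integral_add_right_eq_self (Set.indicator B h) (n • a)).symm
        rw [e1]
        refine (integral_congr_ae ?_).symm
        filter_upwards [hpern n] with p hp
        by_cases hm : p + n • a ∈ B <;>
          simp [hF_def, Set.indicator, hm, hp]
      have claim2 : ∀ p, Tendsto (fun n => F n p) atTop (nhds 0) := by
        intro p
        have hev : ∀ᶠ n : ℕ in atTop, F n p = 0 := by
          have hgt : ∀ᶠ n : ℕ in atTop, (R : ℝ) + ‖p‖ ≤ (n : ℝ) * ‖a‖ := by
            have ht : Tendsto (fun n : ℕ => (n : ℝ) * ‖a‖) atTop atTop :=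
              Tendsto.atTop_mul_const ha_pos tendsto_natCast_atTop_atTop
            exact ht.eventually_ge_atTop _
          filter_upwards [hgt] with n hn
          have hnotin : p + n • a ∉ B := by
            rw [hB_def]
            simp only [Metric.mem_ball, dist_zero_right, not_lt]
            have h1 : ‖n • a‖ ≤ ‖p + n • a‖ + ‖p‖ := by
              have := norm_add_le (p + n • a) (-p)
              simpa [add_comm] using this
            have h2 : ‖n • a‖ = (n : ℝ) * ‖a‖ := by
              rw [← Nat.cast_smul_eq_nsmul ℝ n a, norm_smul]
              simp
            linarith
          simp [hF_def, Set.indicator, hnotin]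
        exact tendsto_const_nhds.congr' (by filter_upwards [hev] with n hn; rw [hn])
      have hFmeas : ∀ n : ℕ, AEStronglyMeasurable (F n) volume := by
        intro n
        exact hh_meas.indicator (hBmeas.preimage (measurable_add_const _))
      have hFbound : ∀ n : ℕ, ∀ᵐ p : EuclideanSpace ℝ (Fin N) ∂volume, ‖F n p‖ ≤ h p := by
        intro n
        refine Eventually.of_forall fun p => ?_
        by_cases hm : p + n • a ∈ B <;>
          simp [hF_def, Set.indicator, hm, abs_of_nonneg (hh_nonneg p), hh_nonneg p]
      have hDCT : Tendsto (fun n => ∫ p, F n p) atTop (nhds (∫ _p : EuclideanSpace ℝ (Fin N), (0 : ℝ))) :=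
        tendsto_integral_of_dominated_convergence h hFmeas hh_int hFbound
          (Eventually.of_forall claim2)
      rw [integral_zero] at hDCT
      have hconst : Tendsto (fun _n : ℕ => ∫ p, Set.indicator B h p) atTop
          (nhds (∫ p, Set.indicator B h p)) := tendsto_const_nhds
      have hzero : ∫ p, Set.indicator B h p = 0 := by
        have := hDCT.congr (fun n => claim1 n)
        exact tendsto_nhds_unique this hconst |>.symm
      have hset : ∫ p in B, h p ∂volume = 0 := by
        rw [← integral_indicator hBmeas]
        exact hzero
      have hres : h =ᵐ[volume.restrict B] 0 := by
        have := (integral_eq_zero_iff_of_nonneg (fun p => hh_nonneg p)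
          (hh_int.restrict (s := B))).mp hset
        exact this
      exact ae_imp_of_ae_restrict hres
    have hall : ∀ᵐ p : EuclideanSpace ℝ (Fin N) ∂volume,
        ∀ R : ℕ, p ∈ Metric.ball (0 : EuclideanSpace ℝ (Fin N)) (R : ℝ) → h p = 0 :=
      ae_all_iff.2 hB
    filter_upwards [hall] with p hp
    obtain ⟨R, hR⟩ := exists_nat_gt ‖p‖
    exact hp R (by simpa [Metric.mem_ball, dist_zero_right] using hR)
  · -- non-unimodular case
    have hz : (1 - r ^ 2) * ∫ p, h p = 0 := by linarith
    have hI : ∫ p, h p = 0 :=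
      (mul_eq_zero.mp hz).resolve_left (sub_ne_zero.mpr (Ne.symm hr1))
    exact (integral_eq_zero_iff_of_nonneg hh_nonneg hh_int).mp hI
end

section
/- First-order thermal population conservation by the optimized exponential amplitude (Eqs. (11)–(12) of the paper): Let ℏ, m, ω, θ > 0 and κ, c ∈ ℝ. Set τ₀ = ℏω/(2θ), λ = κ·tanh(τ₀/2) (= κ·tanh(ℏω/(4θ))), and f(p) = c·exp(λ·p/(mω)). For τ > 0 define the Gaussian (Mehler) kernel G_τ(p, p') = exp( −(1/(4mℏω))·[ tanh(τ)·(p + p')² + coth(τ)·(p − p')² ] ), which is, up to normalization, the momentum-representation kernel of exp(−(2τ/(ℏω))·H) for the harmonic oscillator Hamiltonian H = p̂²/(2m) + mω²x̂²/2; in particular G_{τ₀} is proportional to the kernel of the thermal state ρ_θ ∝ exp(−H/θ). Define the dissipator kernel Δ(p, p') = f(p + ℏκ)·f(p' + ℏκ)·G_{τ₀}(p + ℏκ, p' + ℏκ) − (1/2)·( f(p)² + f(p')² )·G_{τ₀}(p, p'). Then for every τ > 0: ∫_ℝ ∫_ℝ G_τ(p, p')·Δ(p', p) dp dp' = 0.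 (Equivalently, Tr[exp(−αH)·D_A(ρ_θ)] = 0 for every α > 0, i.e. the dissipator built from the amplitude f of Eq. (12) leaves every thermal level population of ρ_θ instantaneously invariant.) -/
open MeasureTheory
open Real

/-- Gaussian with linear term is integrable. -/
lemma gauss_integrable (A B C : ℝ) (hA : 0 < A) :
    Integrable (fun x : ℝ => Real.exp (-A * x ^ 2 + B * x + C)) := by
  have h : (fun x : ℝ => Real.exp (-A * x ^ 2 + B * x + C))
      = fun x => Real.exp (B ^ 2 / (4 * A) + C) * Real.exp (-A * (x - B / (2 * A)) ^ 2) := by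
    funext x
    rw [← Real.exp_add]
    congr 1
    field_simp
    ring
  rw [h]
  exact ((integrable_exp_neg_mul_sq hA).comp_sub_right (B / (2 * A))).const_mul _

/-- Gaussian integral with linear and constant term. -/
lemma gauss_integral (A B C : ℝ) (hA : 0 < A) :
    ∫ x : ℝ, Real.exp (-A * x ^ 2 + B * x + C)
      = Real.sqrt (π / A) * Real.exp (B ^ 2 / (4 * A) + C) := by
  have h : (fun x : ℝ => Real.exp (-A * x ^ 2 + B * x + C))
      = fun x => Real.exp (B ^ 2 / (4 * A) + C) * Real.exp (-A * (x - B / (2 * A)) ^ 2) := by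
    funext x
    rw [← Real.exp_add]
    congr 1
    field_simp
    ring
  rw [h, integral_const_mul,
    integral_sub_right_eq_self (fun x : ℝ => Real.exp (-A * x ^ 2)) (B / (2 * A)),
    integral_gaussian, mul_comm]

lemma tanh_two_mul' (x : ℝ) :
    Real.tanh (2 * x) = 2 * Real.tanh x / (1 + Real.tanh x ^ 2) := by
  have hc : Real.cosh x ≠ 0 := (Real.cosh_pos x).ne'
  have hc2 : (0:ℝ) < Real.cosh x ^ 2 + Real.sinh x ^ 2 := by positivity
  rw [Real.tanh_eq_sinh_div_cosh, Real.tanh_eq_sinh_div_cosh, Real.sinh_two_mul,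
    Real.cosh_two_mul]
  field_simp

lemma exp_lem1 (c u v w g E : ℝ) (h : u + v + w + g = E) :
    Real.exp g * (c * Real.exp u * (c * Real.exp v) * Real.exp w) = c ^ 2 * Real.exp E := by
  rw [← h, Real.exp_add, Real.exp_add, Real.exp_add]
  ring

lemma exp_lem2 (c s r z g E2 E3 : ℝ) (h2 : s + s + z + g = E2) (h3 : r + r + z + g = E3) :
    Real.exp g * (1 / 2 * ((c * Real.exp s) ^ 2 + (c * Real.exp r) ^ 2) * Real.exp z)
      = c ^ 2 / 2 * Real.exp E2 + c ^ 2 / 2 * Real.exp E3 := by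
  rw [← h2, ← h3, Real.exp_add, Real.exp_add, Real.exp_add, Real.exp_add, Real.exp_add,
    Real.exp_add]
  ring

set_option maxHeartbeats 1000000 in
lemma key_r1 (a b T t0 : ℝ) (hb : 0 < b) (hT : 0 < T) (ht0 : 0 < t0)
    (T₀ C C₀ α D α' μ e : ℝ)
    (hT₀ : T₀ = 2 * t0 / (1 + t0 ^ 2)) (hC : C = 1 / T) (hC₀ : C₀ = (1 + t0 ^ 2) / (2 * t0))
    (hα : α = b * (T + T₀ + C + C₀)) (hD : D = 2 * b * (C + C₀ - T - T₀))
    (hα' : α' = α - D ^ 2 / (4 * α)) (hμ : μ = 4 * a * b * t0) (he : e = 4 * a * b * (t0 - T₀)) :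
    (e + e * D / (2 * α)) ^ 2 / (4 * α') + (e ^ 2 / (4 * α) + 4 * a ^ 2 * b * (2 * t0 - T₀))
      = (2 * μ) ^ 2 / (4 * α') + 0 := by
  have ht0' : (0:ℝ) < 1 + t0 ^ 2 := by positivity
  have hT₀p : 0 < T₀ := by rw [hT₀]; positivity
  have hCp : 0 < C := by rw [hC]; positivity
  have hC₀p : 0 < C₀ := by rw [hC₀]; positivity
  have hNp : 0 < T + T₀ := by positivity
  have hPp : 0 < C + C₀ := by positivity
  have hαv : α = b * ((T + T₀) + (C + C₀)) := by rw [hα]; ring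
  have hDv : D = 2 * b * ((C + C₀) - (T + T₀)) := by rw [hD]; ring
  have hα'v : α' = 4 * b * (T + T₀) * (C + C₀) / ((T + T₀) + (C + C₀)) := by
    rw [hα', hαv, hDv]; field_simp; ring
  have hstep1 : (e + e * D / (2 * α)) ^ 2 / (4 * α') + e ^ 2 / (4 * α)
      = e ^ 2 / (4 * b * (T + T₀)) := by
    rw [hα'v, hαv, hDv]; field_simp; ring
  have hstep2 : (2 * μ) ^ 2 / (4 * α')
      = μ ^ 2 * ((T + T₀) + (C + C₀)) / (4 * b * (T + T₀) * (C + C₀)) := by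
    rw [hα'v]; field_simp; ring
  rw [add_zero, ← add_assoc, hstep1, hstep2, hμ, he, hT₀, hC, hC₀]
  have h2 : (0:ℝ) < T + 2 * t0 / (1 + t0 ^ 2) := by positivity
  have h3 : (0:ℝ) < 1 / T + (1 + t0 ^ 2) / (2 * t0) := by positivity
  field_simp
  ring

set_option maxHeartbeats 1000000 in
lemma key_r3 (μ α D α' : ℝ) (hα : 0 < α) (hα' : α' = α - D ^ 2 / (4 * α)) (hα'p : 0 < α') :
    (μ * D / α) ^ 2 / (4 * α') + (0 + μ ^ 2 / α) = (2 * μ) ^ 2 / (4 * α') + 0 := by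
  have h4 : 4 * α * α' = 4 * α ^ 2 - D ^ 2 := by rw [hα']; field_simp
  have hαne := hα.ne'
  have hα'ne := hα'p.ne'
  field_simp
  linear_combination (μ ^ 2) * h4

set_option maxHeartbeats 2000000 in
/-- **First-order thermal population conservation by the optimized exponential
amplitude** (Eqs. (11)–(12) of the paper). For the one-dimensional harmonic oscillator
`H = p̂²/(2m) + mω²x̂²/2`, the Mehler kernel
`G_τ(p, p') = exp(−(1/(4mℏω))·[tanh(τ)(p + p')² + coth(τ)(p − p')²])` is (up to
normalization) the momentum-representation kernel of `exp(−(2τ/(ℏω))H)`, and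
`G_{τ₀}` with `τ₀ = ℏω/(2θ)` is proportional to the kernel of the thermal state `ρ_θ`.
With the optimized amplitude `f(p) = c·exp(λp/(mω))`, `λ = κ·tanh(ℏω/(4θ))`, the
dissipator kernel `Δ` (of `D_A(ρ_θ)` for `(Aψ)(p) = f(p + ℏκ)ψ(p + ℏκ)`) satisfies
`∫∫ G_τ(p, p')·Δ(p', p) dp dp' = 0` for all `τ > 0`, i.e. `Tr[exp(−αH)·D_A(ρ_θ)] = 0`
for every `α > 0`: every thermal level population is instantaneously invariant. -/
theorem thermal_population_conservation
    (ℏ m ω θ : ℝ) (hℏ : 0 < ℏ) (hm : 0 < m) (hω : 0 < ω) (hθ : 0 < θ)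
    (κ c : ℝ)
    (τ₀ lam : ℝ) (hτ₀ : τ₀ = ℏ * ω / (2 * θ)) (hlam : lam = κ * Real.tanh (τ₀ / 2))
    (f : ℝ → ℝ) (hf : ∀ p, f p = c * Real.exp (lam * p / (m * ω)))
    (G : ℝ → ℝ → ℝ → ℝ)
    (hG : ∀ τ p p', G τ p p' = Real.exp (-(1 / (4 * m * ℏ * ω)) *
        (Real.tanh τ * (p + p') ^ 2 + (Real.cosh τ / Real.sinh τ) * (p - p') ^ 2)))
    (Δ : ℝ → ℝ → ℝ)
    (hΔ : ∀ p p', Δ p p' =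
        f (p + ℏ * κ) * f (p' + ℏ * κ) * G τ₀ (p + ℏ * κ) (p' + ℏ * κ)
          - (1 / 2) * (f p ^ 2 + f p' ^ 2) * G τ₀ p p') :
    ∀ τ : ℝ, 0 < τ → (∫ p' : ℝ, ∫ p : ℝ, G τ p p' * Δ p' p) = 0 := by
  intro τ hτ
  have hτ₀p : 0 < τ₀ := by rw [hτ₀]; positivity
  have hsτ : 0 < Real.sinh τ := Real.sinh_pos_iff.2 hτ
  have hcτ : 0 < Real.cosh τ := Real.cosh_pos τ
  have hsτ₀ : 0 < Real.sinh τ₀ := Real.sinh_pos_iff.2 hτ₀p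
  have hcτ₀ : 0 < Real.cosh τ₀ := Real.cosh_pos τ₀
  set t0 := Real.tanh (τ₀ / 2) with ht0d
  set T := Real.tanh τ with hTd
  set C := Real.cosh τ / Real.sinh τ with hCd
  set T₀ := Real.tanh τ₀ with hT₀d
  set C₀ := Real.cosh τ₀ / Real.sinh τ₀ with hC₀d
  set b := 1 / (4 * m * ℏ * ω) with hbd
  set a := ℏ * κ with had
  set μ := lam / (m * ω) with hμd
  set α := b * (T + T₀ + C + C₀) with hαd
  set D := 2 * b * (C + C₀ - T - T₀) with hDd
  set α' := α - D ^ 2 / (4 * α) with hα'd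
  set e := μ - 4 * a * b * T₀ with hed
  have ht0 : 0 < t0 := by
    rw [ht0d, Real.tanh_eq_sinh_div_cosh]
    exact div_pos (Real.sinh_pos_iff.2 (by positivity)) (Real.cosh_pos _)
  have hTpos : 0 < T := by
    rw [hTd, Real.tanh_eq_sinh_div_cosh]; exact div_pos hsτ hcτ
  have hT₀pos : 0 < T₀ := by
    rw [hT₀d, Real.tanh_eq_sinh_div_cosh]; exact div_pos hsτ₀ hcτ₀
  have hCpos : 0 < C := by rw [hCd]; exact div_pos hcτ hsτ
  have hC₀pos : 0 < C₀ := by rw [hC₀d]; exact div_pos hcτ₀ hsτ₀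
  have hbpos : 0 < b := by rw [hbd]; positivity
  have hCv : C = 1 / T := by
    rw [hCd, hTd, Real.tanh_eq_sinh_div_cosh, one_div_div]
  have hT₀v : T₀ = 2 * t0 / (1 + t0 ^ 2) := by
    rw [hT₀d, ht0d]
    conv_lhs => rw [show τ₀ = 2 * (τ₀ / 2) by ring]
    exact tanh_two_mul' (τ₀ / 2)
  have hC₀v : C₀ = (1 + t0 ^ 2) / (2 * t0) := by
    have h1 : C₀ = 1 / T₀ := by
      rw [hC₀d, hT₀d, Real.tanh_eq_sinh_div_cosh, one_div_div]
    rw [h1, hT₀v, one_div_div]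
  have hμv : μ = 4 * a * b * t0 := by
    rw [hμd, hlam, had, hbd]; field_simp
  have hev : e = 4 * a * b * (t0 - T₀) := by rw [hed, hμv]; ring
  have hαpos : 0 < α := by
    rw [hαd]; exact mul_pos hbpos (by linarith)
  have hα'pos : 0 < α' := by
    have h1 : α' = (2 * α - D) * (2 * α + D) / (4 * α) := by
      rw [hα'd]; field_simp; ring
    have h2 : 2 * α - D = 4 * b * (T + T₀) := by rw [hαd, hDd]; ring
    have h3 : 2 * α + D = 4 * b * (C + C₀) := by rw [hαd, hDd]; ring
    rw [h1, h2, h3]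
    exact div_pos (mul_pos (by nlinarith) (by nlinarith)) (by linarith)
  have hαne : α ≠ 0 := hαpos.ne'
  -- pointwise identity for the integrand
  have hpt : ∀ p' p : ℝ, G τ p p' * Δ p' p =
      c ^ 2 * Real.exp (-α * p ^ 2 + (e + D * p') * p +
          (μ * p' + 2 * μ * a - b * T₀ * (p' + 2 * a) ^ 2 - b * (T + C + C₀) * p' ^ 2))
        - (c ^ 2 / 2 * Real.exp (-α * p ^ 2 + D * p' * p + (2 * μ * p' - α * p' ^ 2))
          + c ^ 2 / 2 * Real.exp (-α * p ^ 2 + (2 * μ + D * p') * p + -(α * p' ^ 2))) := by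
    intro p' p
    simp only [hΔ, hf, hG]
    rw [mul_sub]
    congr 1
    · apply exp_lem1
      simp only [hed, hμd, hαd, hDd, hTd, hCd, hT₀d, hC₀d, hbd, had]
      field_simp
      ring
    · apply exp_lem2
      · simp only [hed, hμd, hαd, hDd, hTd, hCd, hT₀d, hC₀d, hbd, had]
        field_simp
        ring
      · simp only [hed, hμd, hαd, hDd, hTd, hCd, hT₀d, hC₀d, hbd, had]
        field_simp
        ring
  -- inner integral
  have hInner : ∀ p' : ℝ, (∫ p : ℝ, G τ p p' * Δ p' p)
      = Real.sqrt (π / α) *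
        (c ^ 2 * Real.exp (-α' * p' ^ 2 + (e + e * D / (2 * α)) * p' +
            (e ^ 2 / (4 * α) + 4 * a ^ 2 * b * (2 * t0 - T₀)))
          - (c ^ 2 / 2 * Real.exp (-α' * p' ^ 2 + 2 * μ * p' + 0)
            + c ^ 2 / 2 * Real.exp (-α' * p' ^ 2 + μ * D / α * p' + (0 + μ ^ 2 / α)))) := by
    intro p'
    have hfun : (fun p : ℝ => G τ p p' * Δ p' p) = fun p =>
        c ^ 2 * Real.exp (-α * p ^ 2 + (e + D * p') * p +
            (μ * p' + 2 * μ * a - b * T₀ * (p' + 2 * a) ^ 2 - b * (T + C + C₀) * p' ^ 2))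
          - (c ^ 2 / 2 * Real.exp (-α * p ^ 2 + D * p' * p + (2 * μ * p' - α * p' ^ 2))
            + c ^ 2 / 2 * Real.exp (-α * p ^ 2 + (2 * μ + D * p') * p + -(α * p' ^ 2))) :=
      funext fun p => hpt p' p
    have h23 : Integrable (fun p : ℝ =>
        c ^ 2 / 2 * Real.exp (-α * p ^ 2 + D * p' * p + (2 * μ * p' - α * p' ^ 2))
          + c ^ 2 / 2 * Real.exp (-α * p ^ 2 + (2 * μ + D * p') * p + -(α * p' ^ 2))) :=
      ((gauss_integrable α _ _ hαpos).const_mul _).add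
        ((gauss_integrable α _ _ hαpos).const_mul _)
    rw [hfun, integral_sub (((gauss_integrable α _ _ hαpos).const_mul _)) h23,
      integral_add ((gauss_integrable α _ _ hαpos).const_mul _)
        ((gauss_integrable α _ _ hαpos).const_mul _),
      integral_const_mul, integral_const_mul, integral_const_mul,
      gauss_integral α _ _ hαpos, gauss_integral α _ _ hαpos, gauss_integral α _ _ hαpos]
    have hq1 : (e + D * p') ^ 2 / (4 * α) +
        (μ * p' + 2 * μ * a - b * T₀ * (p' + 2 * a) ^ 2 - b * (T + C + C₀) * p' ^ 2)
        = -α' * p' ^ 2 + (e + e * D / (2 * α)) * p' +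
            (e ^ 2 / (4 * α) + 4 * a ^ 2 * b * (2 * t0 - T₀)) := by
      rw [hα'd, hed, hμv, hαd]
      have hne : b * (T + T₀ + C + C₀) ≠ 0 := by rw [← hαd]; exact hαne
      field_simp
      ring
    have hq2 : (D * p') ^ 2 / (4 * α) + (2 * μ * p' - α * p' ^ 2)
        = -α' * p' ^ 2 + 2 * μ * p' + 0 := by
      rw [hα'd]
      field_simp
      ring
    have hq3 : (2 * μ + D * p') ^ 2 / (4 * α) + -(α * p' ^ 2)
        = -α' * p' ^ 2 + μ * D / α * p' + (0 + μ ^ 2 / α) := by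
      rw [hα'd]
      field_simp
      ring
    rw [hq1, hq2, hq3]
    ring
  have h23' : Integrable (fun p' : ℝ =>
      c ^ 2 / 2 * Real.exp (-α' * p' ^ 2 + 2 * μ * p' + 0)
        + c ^ 2 / 2 * Real.exp (-α' * p' ^ 2 + μ * D / α * p' + (0 + μ ^ 2 / α))) :=
    ((gauss_integrable α' _ _ hα'pos).const_mul _).add
      ((gauss_integrable α' _ _ hα'pos).const_mul _)
  simp only [hInner]
  rw [integral_const_mul,
    integral_sub ((gauss_integrable α' _ _ hα'pos).const_mul _) h23',
    integral_add ((gauss_integrable α' _ _ hα'pos).const_mul _)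
      ((gauss_integrable α' _ _ hα'pos).const_mul _),
    integral_const_mul, integral_const_mul, integral_const_mul,
    gauss_integral α' _ _ hα'pos, gauss_integral α' _ _ hα'pos, gauss_integral α' _ _ hα'pos,
    key_r1 a b T t0 hbpos hTpos ht0 T₀ C C₀ α D α' μ e hT₀v hCv hC₀v hαd hDd hα'd hμv hev,
    key_r3 μ α D α' hαpos hα'd hα'pos]
  ring
end
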